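/- arXiv:2210.06899 — 2 statements merged into one kernel-verified Lean document; each statement's English description precedes it below -/
import Mathlib

section
/- Let A, B, C be finite trees and let f : A → B and g : B → C be weakly coherent monotone epimorphisms. Then g∘f : A → C is a weakly coherent monotone epimorphism. Moreover, if c ∈ieving C is a ramification point, b ∈ g⁻¹(c) witnesses the weak coherence of g at c, and a ∈ f⁻¹(b) witnesses the weak coherence of f at b, then a witnesses the weak coherence of g∘f at c. -/
open SimpleGraph

namespace PF

/-! ### Basic graph notions (graphs are simple graphs; the reflexive edge relation
of the paper corresponds to `G.Adj x y ∨ x = y`). -/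

/-- The order of a vertex: its number of neighbours, which for a finite tree equals
the number of connected components of the complement of the vertex. -/
noncomputable def ord {V : Type*} (T : SimpleGraph V) (a : V) : ℕ :=
  Nat.card (T.neighborSet a)

/-- The graph obtained by deleting the vertex `a`. -/
def del {V : Type*} (T : SimpleGraph V) (a : V) : SimpleGraph {x : V // x ≠ a} :=
  SimpleGraph.comap Subtype.val T

/-- `x` and `y` are vertices different from `a` lying in the same connected component
of `T ∖ {a}`. -/
def SameComp {V : Type*} (T : SimpleGraph V) (a x y : V) : Prop :=
  ∃ (hx : x ≠ a) (hy : y ≠ a), (del T a).Reachable ⟨x, hx⟩ ⟨y, hy⟩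

/-- Epimorphism of graphs (in the reflexive convention of the paper): a vertex surjection
such that a (nontrivial) edge is present in the codomain iff it is witnessed by an edge
between the fibers. -/
def IsEpi {V W : Type*} (B : SimpleGraph W) (A : SimpleGraph V) (f : W → V) : Prop :=
  Function.Surjective f ∧
    ∀ a a' : V, A.Adj a a' ↔ (a ≠ a' ∧ ∃ b b', f b = a ∧ f b' = a' ∧ B.Adj b b')

/-- A map is monotone if every fiber induces a connected subgraph. -/
def IsMonotone {V W : Type*} (B : SimpleGraph W) (f : W → V) : Prop :=
  ∀ a : V, (SimpleGraph.comap (Subtype.val : (f ⁻¹' {a}) → W) B).Connected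

/-- `b` witnesses the weak coherence of `f : B → A` at `a`: `b` is in the fiber of `a`,
has order at least that of `a`, and the assignment sending a connected component of
`A ∖ {a}` to the connected component of `B ∖ {b}` containing its preimage is a
well-defined injection. -/
def IsWeakWitness {V W : Type*} (A : SimpleGraph V) (B : SimpleGraph W)
    (f : W → V) (a : V) (b : W) : Prop :=
  f b = a ∧ ord A a ≤ ord B b ∧
    ∀ x y : W, f x ≠ a → f y ≠ a →
      (SameComp A a (f x) (f y) ↔ SameComp B b x y)

/-- `b` witnesses the coherence of `f : B → A` at `a`: weak coherence where moreover
`b` has the same order as `a` (so the induced injection between components is a bijection). -/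
def IsCohWitness {V W : Type*} (A : SimpleGraph V) (B : SimpleGraph W)
    (f : W → V) (a : V) (b : W) : Prop :=
  IsWeakWitness A B f a b ∧ ord B b = ord A a

/-- `f : B → A` is weakly coherent: every ramification point of `A` is a point of
weak coherence for `f`. -/
def WeaklyCoherent {V W : Type*} (A : SimpleGraph V) (B : SimpleGraph W) (f : W → V) : Prop :=
  ∀ a : V, 3 ≤ ord A a → ∃ b, IsWeakWitness A B f a b

/-- `f : B → A` is coherent: every ramification point of `A` is a point of coherence for `f`. -/
def Coherent {V W : Type*} (A : SimpleGraph V) (B : SimpleGraph W) (f : W → V) : Prop :=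
  ∀ a : V, 3 ≤ ord A a → ∃ b, IsCohWitness A B f a b

/-! ### The families `𝓕_P` and `𝓖_P` -/

/-- Membership in the family `𝓕_P`: a finite tree with no vertex of order 2. -/
def MemF {V : Type*} (A : SimpleGraph V) : Prop :=
  A.IsTree ∧ ∀ a : V, ord A a ≠ 2

/-- Epimorphisms of the family `𝓕_P` (for `P ⊆ {3,4,…,∞}`, `∞ = ⊤ ∈ P`): monotone
epimorphisms, coherent at points of order in `P`, and weakly coherent at all other
ramification points with a witness of order not in `P`. -/
def EpiF (P : Set ℕ∞) {V W : Type*} (A : SimpleGraph V) (B : SimpleGraph W) (f : W → V) : Prop :=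
  IsEpi B A f ∧ IsMonotone B f ∧
    (∀ a : V, (ord A a : ℕ∞) ∈ P → ∃ b, IsCohWitness A B f a b) ∧
    (∀ a : V, 3 ≤ ord A a → (ord A a : ℕ∞) ∉ P →
      ∃ b, IsWeakWitness A B f a b ∧ (ord B b : ℕ∞) ∉ P)

/-- Membership in the family `𝓖_P`: a finite tree all of whose vertices are endpoints
or have order in `P`. -/
def MemG (P : Set ℕ∞) {V : Type*} (A : SimpleGraph V) : Prop :=
  A.IsTree ∧ ∀ a : V, ord A a ≤ 1 ∨ (ord A a : ℕ∞) ∈ P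

/-- Epimorphisms of the family `𝓖_P`: coherent monotone epimorphisms. -/
def EpiG {V W : Type*} (A : SimpleGraph V) (B : SimpleGraph W) (f : W → V) : Prop :=
  IsEpi B A f ∧ IsMonotone B f ∧ Coherent A B f

/-! ### Projective Fraïssé families of finite graphs -/

/-- A finite graph, on a vertex set `Fin n`.  (Since every finite graph is isomorphic
to one of this form, a family of such graphs automatically has only countably many
isomorphism types.) -/
structure FGraph where
  card : ℕ
  graph : SimpleGraph (Fin card)

/-- A class of finite graphs together with a distinguished class of epimorphisms:
`mor A B f` means that `f` is a distinguished epimorphism from `B` onto `A`. -/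
structure Family where
  obj : FGraph → Prop
  mor : ∀ A B : FGraph, (Fin B.card → Fin A.card) → Prop

/-- `T` is a projective Fraïssé family. -/
structure IsPFF (T : Family) : Prop where
  mor_obj : ∀ A B f, T.mor A B f → T.obj A ∧ T.obj B
  mor_epi : ∀ A B f, T.mor A B f → IsEpi B.graph A.graph f
  id_mem : ∀ A, T.obj A → T.mor A A id
  comp_mem : ∀ A B C f g, T.mor A B f → T.mor B C g → T.mor A C (f ∘ g)
  jpp : ∀ A B, T.obj A → T.obj B → ∃ C f g, T.mor A C f ∧ T.mor B C g
  amalg : ∀ A B C f g, T.mor A B f → T.mor A C g →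
    ∃ D h k, T.mor B D h ∧ T.mor C D k ∧ f ∘ h = g ∘ k

/-- An inverse sequence in the family `T`. -/
structure FSeq (T : Family) where
  F : ℕ → FGraph
  bond : ∀ m n, n ≤ m → Fin (F m).card → Fin (F n).card
  bond_refl : ∀ n x, bond n n le_rfl x = x
  bond_comp : ∀ k m n (h1 : n ≤ m) (h2 : m ≤ k) x,
    bond m n h1 (bond k m h2 x) = bond k n (h1.trans h2) x
  bond_mor : ∀ m n (h : n ≤ m), T.mor (F n) (F m) (bond m n h)

/-- A Fraïssé sequence for the family `T`. -/
structure IsFraisseSeq (T : Family) (S : FSeq T) : Prop where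
  proj : ∀ A, T.obj A → ∃ n f, T.mor A (S.F n) f
  extend : ∀ n (A : FGraph) (f : Fin A.card → Fin (S.F n).card), T.mor (S.F n) A f →
    ∃ (m : ℕ) (h : n ≤ m) (g : Fin (S.F m).card → Fin A.card),
      T.mor A (S.F m) g ∧ f ∘ g = S.bond m n h

/-- The projective Fraïssé limit of a sequence: the inverse limit of the sequence,
as a closed subspace of the product of the (discrete) finite vertex sets. -/
def Limit {T : Family} (S : FSeq T) : Type :=
  {x : ∀ n, Fin (S.F n).card // ∀ m n (h : n ≤ m), S.bond m n h (x m) = x n}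

instance {T : Family} (S : FSeq T) : TopologicalSpace (Limit S) := by
  unfold Limit; infer_instance

/-- The (reflexive) edge relation of the limit. -/
def EdgeRel {T : Family} (S : FSeq T) (x y : Limit S) : Prop :=
  ∀ n, x.1 n = y.1 n ∨ (S.F n).graph.Adj (x.1 n) (y.1 n)

/-- The simple graph on the limit determined by the nontrivial edges. -/
def limitGraph {T : Family} (S : FSeq T) : SimpleGraph (Limit S) where
  Adj x y := x ≠ y ∧ EdgeRel S x y
  symm := by
    refine ⟨fun x y h => ?_⟩
    exact ⟨h.1.symm, fun n => (h.2 n).imp Eq.symm SimpleGraph.Adj.symm⟩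
  loopless := ⟨fun x h => h.1 rfl⟩

/-- The topological realization of the limit: the quotient by the edge relation. -/
def Realization {T : Family} (S : FSeq T) : Type := Quot (EdgeRel S)

/-- The quotient map onto the topological realization. -/
def realMap {T : Family} (S : FSeq T) : Limit S → Realization S := Quot.mk _

instance {T : Family} (S : FSeq T) : TopologicalSpace (Realization S) := by
  unfold Realization; infer_instance

/-! ### Splitting edges -/

/-- The graph obtained from `A` by splitting the edge `⟨a,b⟩`: a new vertex `∗` is added,
the edge `⟨a,b⟩` is removed and replaced by the edges `⟨a,∗⟩` and `⟨∗,b⟩`. -/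
def splitGraph {k : ℕ} (A : SimpleGraph (Fin k)) (a b : Fin k) : SimpleGraph (Fin (k + 1)) :=
  SimpleGraph.fromRel fun x y =>
    (∃ x' y' : Fin k, x = x'.castSucc ∧ y = y'.castSucc ∧ A.Adj x' y' ∧
      ¬(x' = a ∧ y' = b) ∧ ¬(x' = b ∧ y' = a)) ∨
    (x = Fin.last k ∧ (y = a.castSucc ∨ y = b.castSucc))

/-- The map collapsing the new vertex `∗` of the split graph to the vertex `c`. -/
def splitMap {k : ℕ} (c : Fin k) : Fin (k + 1) → Fin k :=
  fun x => Fin.lastCases c (fun y => y) x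

/-- A family allows splitting edges if it is closed under splitting an edge, together
with the two maps collapsing the new vertex to either endpoint of the split edge. -/
def AllowsSplitting (T : Family) : Prop :=
  ∀ (A : FGraph) (a b : Fin A.card), T.obj A → A.graph.Adj a b →
    T.obj ⟨A.card + 1, splitGraph A.graph a b⟩ ∧
    T.mor A ⟨A.card + 1, splitGraph A.graph a b⟩ (splitMap a) ∧
    T.mor A ⟨A.card + 1, splitGraph A.graph a b⟩ (splitMap b)

/-! ### Points of weak coherence in the limit -/

/-- A point of the limit is a point of weak coherence if from some index on, each
coordinate is a point of weak coherence of the bonding map from the next level,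
witnessed by the next coordinate. -/
def LimitWeakCohPoint {T : Family} (S : FSeq T) (x : Limit S) : Prop :=
  ∃ k : ℕ, ∀ l, k ≤ l →
    3 ≤ ord (S.F l).graph (x.1 l) ∧
    IsWeakWitness (S.F l).graph (S.F (l + 1)).graph
      (S.bond (l + 1) l (Nat.le_succ l)) (x.1 l) (x.1 (l + 1))

/-! ### Topological notions: number of branches at a point, dendrites, arcs -/

/-- The order of a point of a topological space: the number (in `ℕ∞`) of connected
components of the complement of the point. -/
noncomputable def ordAt (X : Type*) [TopologicalSpace X] (x : X) : ℕ∞ :=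
  ENat.card (ConnectedComponents {y : X // y ≠ x})

/-- `A` is an arc in `X` from `x` to `y`: the image of a continuous injection of the
unit interval sending `0` to `x` and `1` to `y`. -/
def IsArcSet {X : Type*} [TopologicalSpace X] (A : Set X) (x y : X) : Prop :=
  ∃ f : unitInterval → X, Continuous f ∧ Function.Injective f ∧
    Set.range f = A ∧ f 0 = x ∧ f 1 = y

/-- A dendrite: a nondegenerate compact connected locally connected metrizable space in
which every two distinct points are joined by a unique arc. -/
def IsDendrite (X : Type*) [TopologicalSpace X] : Prop :=
  Nontrivial X ∧ CompactSpace X ∧ ConnectedSpace X ∧ LocallyConnectedSpace X ∧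
    TopologicalSpace.MetrizableSpace X ∧
    ∀ x y : X, x ≠ y → ∃! A : Set X, IsArcSet A x y

/-- A set is arcwise dense if every arc with distinct endpoints meets it. -/
def ArcwiseDense {X : Type*} [TopologicalSpace X] (s : Set X) : Prop :=
  ∀ x y : X, x ≠ y → ∀ A : Set X, IsArcSet A x y → ∃ z ∈ s, z ∈ A

/-! ### Topological graphs, graph-arcs and endpoints -/

/-- A topological graph: a compact Hausdorff zero-dimensional second countable space
with a closed (reflexive) edge relation. -/
def IsTopGraph (X : Type*) [TopologicalSpace X] (G : SimpleGraph X) : Prop :=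
  CompactSpace X ∧ T2Space X ∧ TotallyDisconnectedSpace X ∧
    SecondCountableTopology X ∧ IsClosed {p : X × X | G.Adj p.1 p.2 ∨ p.1 = p.2}

/-- Connectedness of a topological graph: there is no partition of the vertex set into
two nonempty disjoint closed sets with no edge between them. -/
def GraphConn (X : Type*) [TopologicalSpace X] (G : SimpleGraph X) : Prop :=
  ¬ ∃ s t : Set X, IsClosed s ∧ IsClosed t ∧ s.Nonempty ∧ t.Nonempty ∧
      Disjoint s t ∧ s ∪ t = Set.univ ∧ ∀ a ∈ s, ∀ b ∈ t, ¬ G.Adj a b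

/-- The topological graph obtained by deleting the vertex `a` remains connected. -/
def GraphConnDel (X : Type*) [TopologicalSpace X] (G : SimpleGraph X) (a : X) : Prop :=
  GraphConn {v : X // v ≠ a} (G.comap Subtype.val)

/-- A topological graph is an arc if it is connected and all but at most two of its
vertices disconnect it when removed. -/
def IsArcGraph (X : Type*) [TopologicalSpace X] (G : SimpleGraph X) : Prop :=
  GraphConn X G ∧ ∃ e : Set X, (∃ u v : X, e ⊆ {u, v}) ∧
    ∀ a : X, a ∉ e → ¬ GraphConnDel X G a

/-- An endpoint of a topological graph which is an arc: a vertex whose removal does not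
disconnect it. -/
def ArcEndpoint (X : Type*) [TopologicalSpace X] (G : SimpleGraph X) (a : X) : Prop :=
  GraphConnDel X G a

/-- `x` is an endpoint of the topological graph `Gr` on `Y`: whenever a topological
graph which is an arc embeds into `Gr` with `x` in the image, `x` is the image of an
endpoint of the arc. -/
def GraphEndpoint (Y : Type*) [TopologicalSpace Y] (Gr : SimpleGraph Y) (x : Y) : Prop :=
  ∀ (X : Type) [TopologicalSpace X] (H : SimpleGraph X), IsTopGraph X H → IsArcGraph X H →
    ∀ h : X → Y, Function.Injective h →
      (‹TopologicalSpace X› = TopologicalSpace.induced h inferInstance) →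
      (∀ a b : X, H.Adj a b ↔ Gr.Adj (h a) (h b)) →
      x ∈ Set.range h → ∃ e : X, ArcEndpoint X H e ∧ h e = x

/-! ### Betweenness and immersions in finite trees -/

/-- `y` lies between `x` and `z`: every walk from `x` to `z` passes through `y`
(in a tree, this says exactly that `y` lies on the unique path from `x` to `z`). -/
def Between {V : Type*} (T : SimpleGraph V) (x y z : V) : Prop :=
  ∀ p : T.Walk x z, y ∈ p.support

/-- An immersion of `A` into `B`: a map preserving and reflecting betweenness of
pairwise distinct vertices. -/
def IsImmersion {V W : Type*} (A : SimpleGraph V) (B : SimpleGraph W) (i : V → W) : Prop :=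
  ∀ a b c : V, a ≠ b → b ≠ c → a ≠ c →
    (Between A a b c ↔ Between B (i a) (i b) (i c))

/-! ### The families `𝓖_P` and `𝓕_P` as families of finite graphs -/

/-- The family `𝓖_P` as a family of finite graphs with distinguished epimorphisms. -/
def familyG (P : Set ℕ∞) : Family where
  obj A := MemG P A.graph
  mor A B f := MemG P A.graph ∧ MemG P B.graph ∧ EpiG A.graph B.graph f

/-- The family `𝓕_P` as a family of finite graphs with distinguished epimorphisms. -/
def familyF (P : Set ℕ∞) : Family where
  obj A := MemF A.graph
  mor A B f := MemF A.graph ∧ MemF B.graph ∧ EpiF P A.graph B.graph f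

end PF

private def inclHom {β : Type*} (B : SimpleGraph β) {s t : Set β} (hst : s ⊆ t) :
    SimpleGraph.comap (Subtype.val : s → β) B →g SimpleGraph.comap (Subtype.val : t → β) B where
  toFun z := ⟨z.1, hst z.2⟩
  map_rel' h := h

private lemma reach_incl {β : Type*} (B : SimpleGraph β) {s t : Set β} (hst : s ⊆ t)
    {x y : s} (h : (SimpleGraph.comap (Subtype.val : s → β) B).Reachable x y) :
    (SimpleGraph.comap (Subtype.val : t → β) B).Reachable ⟨x.1, hst x.2⟩ ⟨y.1, hst y.2⟩ :=
  h.map (inclHom B hst)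

private lemma preimage_connected {α β : Type*} (A : SimpleGraph α) (B : SimpleGraph β)
    (f : α → β) (hf : PF.IsEpi A B f) (hfM : PF.IsMonotone A f)
    (s : Set β) (hs : (SimpleGraph.comap (Subtype.val : s → β) B).Connected) :
    (SimpleGraph.comap (Subtype.val : (f ⁻¹' s) → α) A).Connected := by
  have fiber_reach : ∀ (u v : f ⁻¹' s), f u.1 = f v.1 →
      (SimpleGraph.comap (Subtype.val : (f ⁻¹' s) → α) A).Reachable u v := by
    intro u v huv
    have h1 := (hfM (f u.1)).preconnected ⟨u.1, rfl⟩ ⟨v.1, huv.symm⟩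
    have incl : f ⁻¹' {f u.1} ⊆ f ⁻¹' s := by
      intro z hz
      have : f z = f u.1 := hz
      show f z ∈ s
      rw [this]; exact u.2
    exact reach_incl A incl h1
  have key : ∀ (x y : s) (p : (SimpleGraph.comap (Subtype.val : s → β) B).Walk x y)
      (u v : f ⁻¹' s), f u.1 = x.1 → f v.1 = y.1 →
      (SimpleGraph.comap (Subtype.val : (f ⁻¹' s) → α) A).Reachable u v := by
    intro x y p
    induction p with
    | nil => intro u v hu hv; exact fiber_reach u v (hu.trans hv.symm)
    | @cons x w y hadj p ih =>
      intro u v hu hv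
      have hBadj : B.Adj x.1 w.1 := hadj
      obtain ⟨hne, a, a', ha, ha', haa⟩ := (hf.2 x.1 w.1).mp hBadj
      have has : a ∈ f ⁻¹' s := by show f a ∈ s; rw [ha]; exact x.2
      have has' : a' ∈ f ⁻¹' s := by show f a' ∈ s; rw [ha']; exact w.2
      have r1 := fiber_reach u ⟨a, has⟩ (by rw [hu, ha])
      have r2 : (SimpleGraph.comap (Subtype.val : (f ⁻¹' s) → α) A).Reachable
          ⟨a, has⟩ ⟨a', has'⟩ := SimpleGraph.Adj.reachable haa
      exact (r1.trans r2).trans (ih ⟨a', has'⟩ v ha' hv)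
  obtain ⟨⟨b, hb⟩⟩ := hs.nonempty
  obtain ⟨a, ha⟩ := hf.1 b
  have : Nonempty (f ⁻¹' s) := ⟨⟨a, show f a ∈ s from ha ▸ hb⟩⟩
  refine ⟨fun u v => ?_⟩
  obtain ⟨p⟩ := hs.preconnected ⟨f u.1, u.2⟩ ⟨f v.1, v.2⟩
  exact key _ _ p u v rfl rfl

/-- Let `A, B, C` be finite trees and let `f : A → B` and `g : B → C` be
weakly coherent monotone epimorphisms.  Then `g ∘ f : A → C` is a weakly coherent
monotone epimorphism.  Moreover, if `c ∈ C` is a ramification point, `b ∈ g⁻¹(c)`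
witnesses the weak coherence of `g` at `c`, and `a ∈ f⁻¹(b)` witnesses the weak
coherence of `f` at `b`, then `a` witnesses the weak coherence of `g ∘ f` at `c`. -/
theorem weaklyCoherent_comp {α β γ : Type} [Fintype α] [Fintype β] [Fintype γ]
    (A : SimpleGraph α) (B : SimpleGraph β) (C : SimpleGraph γ)
    (hA : A.IsTree) (hB : B.IsTree) (hC : C.IsTree)
    (f : α → β) (g : β → γ)
    (hfE : PF.IsEpi A B f) (hfM : PF.IsMonotone A f) (hfW : PF.WeaklyCoherent B A f)
    (hgE : PF.IsEpi B C g) (hgM : PF.IsMonotone B g) (hgW : PF.WeaklyCoherent C B g) :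
    (PF.IsEpi A C (g ∘ f) ∧ PF.IsMonotone A (g ∘ f) ∧ PF.WeaklyCoherent C A (g ∘ f)) ∧
      ∀ (c : γ) (b : β) (a : α), 3 ≤ PF.ord C c →
        PF.IsWeakWitness C B g c b → PF.IsWeakWitness B A f b a →
        PF.IsWeakWitness C A (g ∘ f) c a := by
  have key : ∀ (c : γ) (b : β) (a : α), 3 ≤ PF.ord C c →
      PF.IsWeakWitness C B g c b → PF.IsWeakWitness B A f b a →
      PF.IsWeakWitness C A (g ∘ f) c a := by
    intro c b a _ hgw hfw
    obtain ⟨hgb, hgo, hgs⟩ := hgw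
    obtain ⟨hfa, hfo, hfs⟩ := hfw
    refine ⟨by simp [Function.comp, hfa, hgb], hgo.trans hfo, ?_⟩
    intro x y hx hy
    have hfx : f x ≠ b := fun h => hx (by show g (f x) = c; rw [h, hgb])
    have hfy : f y ≠ b := fun h => hy (by show g (f y) = c; rw [h, hgb])
    exact (hgs (f x) (f y) hx hy).trans (hfs x y hfx hfy)
  refine ⟨⟨?_, ?_, ?_⟩, key⟩
  · constructor
    · exact hgE.1.comp hfE.1
    · intro c c'
      constructor
      · intro h
        obtain ⟨hne, b, b', hb, hb', hbb⟩ := (hgE.2 c c').mp h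
        obtain ⟨hne2, a, a', ha, ha', haa⟩ := (hfE.2 b b').mp hbb
        exact ⟨hne, a, a', by show g (f a) = c; rw [ha, hb],
          by show g (f a') = c'; rw [ha', hb'], haa⟩
      · rintro ⟨hne, a, a', ha, ha', haa⟩
        have hne2 : f a ≠ f a' := by
          intro h
          apply hne
          rw [← ha, ← ha']
          show g (f a) = g (f a')
          rw [h]
        have hbb : B.Adj (f a) (f a') := (hfE.2 _ _).mpr ⟨hne2, a, a', rfl, rfl, haa⟩
        exact (hgE.2 c c').mpr ⟨hne, f a, f a', ha, ha', hbb⟩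
  · intro c
    exact preimage_connected A B f hfE hfM (g ⁻¹' {c}) (hgM c)
  · intro c hc
    obtain ⟨b, hb⟩ := hgW c hc
    have hb3 : 3 ≤ PF.ord B b := hc.trans hb.2.1
    obtain ⟨a, ha⟩ := hfW b hb3
    exact ⟨a, key c b a hc hb ha⟩
end

section
/- Let 𝒯 be a projective Fraïssé family of finite trees with weakly coherent epimorphisms that allows splitting edges, and let 𝔽 be its projective Fraïssé limit. If e is an endpoint of the topological graph 𝔽, then there is no f ∈ 𝔽∖{e} with ⟨e,f⟩ ∈ E(𝔽). -/
open SimpleGraph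

namespace PFProof

section TreeLemmas

variable {V : Type*} {G : SimpleGraph V}

/-- The unique path between two vertices of a tree. -/
noncomputable def tp (hG : G.IsTree) (u v : V) : G.Walk u v :=
  ((isTree_iff_existsUnique_path.mp hG).2 u v).choose

lemma tp_isPath (hG : G.IsTree) (u v : V) : (tp hG u v).IsPath :=
  ((isTree_iff_existsUnique_path.mp hG).2 u v).choose_spec.1

lemma tp_eq (hG : G.IsTree) {u v : V} (p : G.Walk u v) (hp : p.IsPath) : p = tp hG u v :=
  ((isTree_iff_existsUnique_path.mp hG).2 u v).choose_spec.2 p hp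

lemma start_mem_tp (hG : G.IsTree) (u v : V) : u ∈ (tp hG u v).support :=
  Walk.start_mem_support _

lemma end_mem_tp (hG : G.IsTree) (u v : V) : v ∈ (tp hG u v).support :=
  Walk.end_mem_support _

lemma tp_self_support (hG : G.IsTree) (u : V) : (tp hG u u).support = [u] := by
  rw [← tp_eq hG Walk.nil (Walk.IsPath.nil)]; rfl

lemma tp_adj_support (hG : G.IsTree) {u v : V} (h : G.Adj u v) :
    (tp hG u v).support = [u, v] := by
  rw [← tp_eq hG (Walk.cons h Walk.nil) (by simp [h.ne])]; rfl

lemma tp_support_split (hG : G.IsTree) {u v q : V} (hq : q ∈ (tp hG u v).support) :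
    (tp hG u v).support = (tp hG u q).support ++ ((tp hG q v).support).tail := by
  classical
  have hts : ((tp hG u v).takeUntil q hq).append ((tp hG u v).dropUntil q hq) = tp hG u v :=
    Walk.take_spec _ hq
  have hp1 : ((tp hG u v).takeUntil q hq).IsPath := (tp_isPath hG u v).takeUntil hq
  have hp2 : ((tp hG u v).dropUntil q hq).IsPath := (tp_isPath hG u v).dropUntil hq
  have e1 : (tp hG u v).takeUntil q hq = tp hG u q := tp_eq hG _ hp1
  have e2 : (tp hG u v).dropUntil q hq = tp hG q v := tp_eq hG _ hp2
  conv_lhs => rw [← hts]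
  rw [Walk.support_append, e1, e2]

lemma tp_mem_split (hG : G.IsTree) {u v q : V} (hq : q ∈ (tp hG u v).support) {x : V}
    (hx : x ∈ (tp hG u v).support) :
    x ∈ (tp hG u q).support ∨ x ∈ (tp hG q v).support := by
  rw [tp_support_split hG hq] at hx
  rcases List.mem_append.mp hx with h | h
  · exact Or.inl h
  · exact Or.inr (List.mem_of_mem_tail h)

lemma tp_support_sub_left (hG : G.IsTree) {u v q : V} (hq : q ∈ (tp hG u v).support) :
    (tp hG u q).support ⊆ (tp hG u v).support := by
  rw [tp_support_split hG hq]; exact fun x hx => List.mem_append.mpr (Or.inl hx)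

lemma tp_support_sub_right (hG : G.IsTree) {u v q : V} (hq : q ∈ (tp hG u v).support) :
    (tp hG q v).support ⊆ (tp hG u v).support := by
  intro x hx
  rw [tp_support_split hG hq]
  rcases (tp hG q v).support.eq_nil_or_concat with h | _
  · simp [h] at hx
  · rcases List.mem_cons.mp (by rwa [(tp hG q v).support_eq_cons] at hx) with h | h
    · subst h; exact List.mem_append.mpr (Or.inl (end_mem_tp hG u x))
    · exact List.mem_append.mpr (Or.inr h)

lemma tp_inter_split (hG : G.IsTree) {u v q : V} (hq : q ∈ (tp hG u v).support) {x : V}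
    (h1 : x ∈ (tp hG u q).support) (h2 : x ∈ (tp hG q v).support) : x = q := by
  have hnd : ((tp hG u v).support).Nodup := (tp_isPath hG u v).2
  rw [tp_support_split hG hq] at hnd
  rcases List.mem_cons.mp (by rwa [(tp hG q v).support_eq_cons] at h2) with h | h
  · exact h
  · exact absurd h1 (fun h1 => (List.disjoint_of_nodup_append hnd) h1 h)

lemma tp_support_symm (hG : G.IsTree) (u v : V) {x : V} :
    x ∈ (tp hG v u).support ↔ x ∈ (tp hG u v).support := by
  rw [← tp_eq hG (tp hG u v).reverse (tp_isPath hG u v).reverse, Walk.support_reverse]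
  exact List.mem_reverse

lemma tp_sub_path (hG : G.IsTree) {u v x y : V} (hx : x ∈ (tp hG u v).support)
    (hy : y ∈ (tp hG u v).support) : (tp hG x y).support ⊆ (tp hG u v).support := by
  rcases tp_mem_split hG hx hy with h | h
  · -- y ∈ supp (tp u x) : tp x y ⊆ tp x u ⊆ (symm) tp u x... careful
    have hy' : y ∈ (tp hG x u).support := (tp_support_symm hG x u).mp h
    intro z hz
    have : z ∈ (tp hG x u).support := tp_support_sub_left hG hy' hz
    exact tp_support_sub_left hG hx ((tp_support_symm hG u x).mp this)
  · intro z hz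
    exact tp_support_sub_right hG hx (tp_support_sub_left hG h hz)

lemma edge_side (hG : G.IsTree) {u v f a : V} (h : G.Adj u v)
    (ha : a ∈ (tp hG u f).support) (ha' : a ∉ (tp hG v f).support) : a = u := by
  by_cases hv : v ∈ (tp hG u f).support
  · rcases tp_mem_split hG hv ha with h1 | h1
    · rw [tp_adj_support hG h] at h1
      rcases List.mem_cons.mp h1 with h2 | h2
      · exact h2
      · simp at h2; subst h2; exact absurd (start_mem_tp hG a f) ha'
    · exact absurd h1 ha'
  · exfalso
    have hpath : (Walk.cons h.symm (tp hG u f)).IsPath := (tp_isPath hG u f).cons hv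
    have := tp_eq hG _ hpath
    apply ha'
    rw [← this]
    exact List.mem_cons_of_mem _ ha

lemma tp_append_edge (hG : G.IsTree) {m u v : V} (h : G.Adj u v)
    (hnv : v ∉ (tp hG m u).support) :
    (tp hG m v).support = (tp hG m u).support ++ [v] := by
  have hpath : ((tp hG m u).append (Walk.cons h Walk.nil)).IsPath := by
    rw [Walk.isPath_def, Walk.support_append]
    simp only [Walk.support_cons, Walk.support_nil, List.tail_cons]
    exact List.Nodup.append (tp_isPath hG m u).2 (List.nodup_singleton v)
      (by simpa using hnv)
  have := tp_eq hG _ hpath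
  rw [← this, Walk.support_append]
  rfl


/-- A set of vertices is `ConnSet` if any two members are joined by a walk inside the set. -/
def ConnSet (G : SimpleGraph V) (S : Set V) : Prop :=
  ∀ a ∈ S, ∀ b ∈ S, ∃ p : G.Walk a b, ∀ x ∈ p.support, x ∈ S

lemma tp_subset_of_connSet (hG : G.IsTree) {S : Set V} (hS : ConnSet G S) {a b : V}
    (ha : a ∈ S) (hb : b ∈ S) : ∀ x ∈ (tp hG a b).support, x ∈ S := by
  classical
  obtain ⟨p, hp⟩ := hS a ha b hb
  have : p.bypass = tp hG a b := by
    exact ((isTree_iff_existsUnique_path.mp hG).2 a b).choose_spec.2 _ p.bypass_isPath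
  intro x hx
  rw [← this] at hx
  exact hp x (p.support_bypass_subset hx)

lemma connSet_side (hG : G.IsTree) (a₀ b₀ : V) :
    ConnSet G {v | b₀ ∉ (tp hG a₀ v).support} := by
  intro v hv v' hv'
  refine ⟨((tp hG a₀ v).reverse.append (tp hG a₀ v')), ?_⟩
  intro x hx
  rw [Walk.mem_support_append_iff] at hx
  have key : ∀ w : V, (b₀ ∉ (tp hG a₀ w).support) → x ∈ (tp hG a₀ w).support →
      b₀ ∉ (tp hG a₀ x).support := by
    intro w hw hxw hb
    exact hw (tp_support_sub_left hG hxw hb)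
  rcases hx with h | h
  · rw [Walk.support_reverse, List.mem_reverse] at h
    exact key v hv h
  · exact key v' hv' h

/-- Crossing lemma: a walk starting inside `S` and containing a vertex outside `S`
has a consecutive pair crossing out of `S`, splitting the walk. -/
lemma crossing {S : Set V} {x y : V} (p : G.Walk x y) (hx : x ∈ S)
    (hout : ∃ w ∈ p.support, w ∉ S) :
    ∃ (u' v' : V) (_ : G.Adj u' v') (p₁ : G.Walk x u') (p₂ : G.Walk v' y),
      u' ∈ S ∧ v' ∉ S ∧ p.support = p₁.support ++ p₂.support := by
  induction p with
  | nil =>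
    obtain ⟨w, hw, hws⟩ := hout
    simp only [Walk.support_nil, List.mem_singleton] at hw
    exact absurd hx (hw ▸ hws)
  | @cons a c y h q ih =>
    by_cases hc : c ∈ S
    · have hout' : ∃ w ∈ q.support, w ∉ S := by
        obtain ⟨w, hw, hws⟩ := hout
        simp only [Walk.support_cons, List.mem_cons] at hw
        rcases hw with rfl | hw
        · exact absurd hx hws
        · exact ⟨w, hw, hws⟩
      obtain ⟨u', v', hadj, p₁, p₂, hu, hv, hsupp⟩ := ih hc hout'
      exact ⟨u', v', hadj, Walk.cons h p₁, p₂, hu, hv, by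
        simp [Walk.support_cons, hsupp]⟩
    · exact ⟨a, c, h, Walk.nil, q, hx, hc, by simp [Walk.support_cons]⟩

lemma crossing_path_split (hG : G.IsTree) {S : Set V} {x y : V} (hx : x ∈ S)
    (hout : ∃ w ∈ (tp hG x y).support, w ∉ S) :
    ∃ (u' v' : V) (_ : G.Adj u' v'),
      u' ∈ S ∧ v' ∉ S ∧
      (tp hG x y).support = (tp hG x u').support ++ (tp hG v' y).support := by
  obtain ⟨u', v', hadj, p₁, p₂, hu, hv, hsupp⟩ := crossing (tp hG x y) hx hout
  have hnd := (tp_isPath hG x y).2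
  rw [hsupp] at hnd
  have h₁ : p₁.IsPath := by
    rw [Walk.isPath_def]; exact hnd.of_append_left
  have h₂ : p₂.IsPath := by
    rw [Walk.isPath_def]; exact hnd.of_append_right
  rw [tp_eq hG p₁ h₁, tp_eq hG p₂ h₂] at hsupp
  exact ⟨u', v', hadj, hu, hv, hsupp⟩

/-- Identification: an edge crossing the two halves of a split path must be the
splitting edge itself. -/
lemma ident (hG : G.IsTree) {m f u' v' c d : V} (huv : G.Adj u' v')
    (hdisj : ∀ x, x ∈ (tp hG m u').support → x ∈ (tp hG v' f).support → False)
    (hc : c ∈ (tp hG m u').support) (hd : d ∈ (tp hG v' f).support)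
    (hcd : G.Adj c d) : c = u' ∧ d = v' := by
  have hsub1 : (tp hG c u').support ⊆ (tp hG m u').support :=
    tp_sub_path hG hc (end_mem_tp hG m u')
  have hsub2 : (tp hG v' d).support ⊆ (tp hG v' f).support :=
    tp_sub_path hG (start_mem_tp hG v' f) hd
  have hpath : ((tp hG c u').append (Walk.cons huv (tp hG v' d))).IsPath := by
    rw [Walk.isPath_def, Walk.support_append]
    simp only [Walk.support_cons, List.tail_cons]
    refine List.Nodup.append (tp_isPath hG c u').2 (tp_isPath hG v' d).2 ?_
    intro a ha ha'
    exact hdisj a (hsub1 ha) (hsub2 ha')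
  have he := tp_eq hG _ hpath
  have hsupp : (tp hG c u').support ++ (tp hG v' d).support = [c, d] := by
    have : ((tp hG c u').append (Walk.cons huv (tp hG v' d))).support
        = (tp hG c u').support ++ (tp hG v' d).support := by
      rw [Walk.support_append]; simp
    rw [he, tp_adj_support hG hcd] at this
    exact this.symm
  have hlen := congrArg List.length hsupp
  simp only [List.length_append, List.length_cons, List.length_nil] at hlen
  have l1 : 0 < (tp hG c u').support.length := List.length_pos_iff.mpr (tp hG c u').support_ne_nil
  have l2 : 0 < (tp hG v' d).support.length := List.length_pos_iff.mpr (tp hG v' d).support_ne_nil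
  have e1 : (tp hG c u').support = [c] := by
    have h1 : (tp hG c u').support.length = 1 := by omega
    obtain ⟨a, ha⟩ := List.length_eq_one_iff.mp h1
    have := (tp hG c u').support_eq_cons
    rw [ha] at this ⊢
    simp at this; rw [this]
  have e2 : (tp hG v' d).support = [v'] := by
    have h2 : (tp hG v' d).support.length = 1 := by omega
    obtain ⟨a, ha⟩ := List.length_eq_one_iff.mp h2
    have := (tp hG v' d).support_eq_cons
    rw [ha] at this ⊢
    simp at this; rw [this]
  constructor
  · have := end_mem_tp hG c u'
    rw [e1] at this
    have : u' = c := by simpa using this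
    exact this.symm
  · rw [e1, e2] at hsupp
    simp only [List.cons_append, List.nil_append, List.cons.injEq] at hsupp
    exact hsupp.2.1.symm

end TreeLemmas

section EpiLemmas

variable {V W : Type*} {A : SimpleGraph V} {B : SimpleGraph W} {f : W → V}

lemma epi_push (he : PF.IsEpi B A f) {b b' : W} (h : B.Adj b b') :
    f b = f b' ∨ A.Adj (f b) (f b') := by
  by_cases hq : f b = f b'
  · exact Or.inl hq
  · exact Or.inr ((he.2 _ _).mpr ⟨hq, b, b', rfl, rfl, h⟩)

lemma epi_lift (he : PF.IsEpi B A f) {a a' : V} (h : A.Adj a a') :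
    ∃ b b', f b = a ∧ f b' = a' ∧ B.Adj b b' := ((he.2 _ _).mp h).2

lemma subtype_walk {S : Set W} :
    ∀ {x y : {w : W // w ∈ S}} (_ : (SimpleGraph.comap (Subtype.val) B).Walk x y),
      ∃ q : B.Walk x.1 y.1, ∀ z ∈ q.support, z ∈ S := by
  intro x y p
  induction p with
  | nil => exact ⟨Walk.nil, by simp [x.2]⟩
  | @cons a c y h p ih =>
    obtain ⟨q, hq⟩ := ih
    refine ⟨Walk.cons h q, ?_⟩
    intro z hz
    rcases List.mem_cons.mp (show z ∈ (a.1 :: q.support) from hz) with rfl | hz'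
    · exact a.2
    · exact hq z hz'

lemma mono_fiber_connSet (hm : PF.IsMonotone B f) (a : V) : ConnSet B {w | f w = a} := by
  intro x hx y hy
  have hx' : x ∈ f ⁻¹' {a} := hx
  have hy' : y ∈ f ⁻¹' {a} := hy
  have hr := ((hm a).preconnected ⟨x, hx'⟩ ⟨y, hy'⟩)
  obtain ⟨p⟩ := hr
  obtain ⟨q, hq⟩ := subtype_walk (S := f ⁻¹' {a}) p
  exact ⟨q, hq⟩

lemma lift_walk (he : PF.IsEpi B A f) (hm : PF.IsMonotone B f) {S : Set V} :
    ∀ {u v : V} (p : A.Walk u v), (∀ z ∈ p.support, z ∈ S) →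
      ∀ {x y : W}, f x = u → f y = v → ∃ q : B.Walk x y, ∀ z ∈ q.support, f z ∈ S := by
  intro u v p
  induction p with
  | nil =>
    intro hps x y hx hy
    obtain ⟨q, hq⟩ := mono_fiber_connSet hm (f x) x rfl y
      (by show f y = f x; rw [hx, hy])
    refine ⟨q, fun z hz => ?_⟩
    have := hq z hz
    simp only [Set.mem_setOf_eq] at this
    rw [this, hx]
    exact hps _ (Walk.start_mem_support _)
  | @cons u c v h p ih =>
    intro hps x y hx hy
    obtain ⟨b, b', hb, hb', hbb⟩ := epi_lift he h
    obtain ⟨q1, hq1⟩ := mono_fiber_connSet hm u x hx b hb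
    obtain ⟨q2, hq2⟩ := ih (fun z hz => hps z (by simp [Walk.support_cons, hz]))
      (x := b') (y := y) hb' hy
    refine ⟨(q1.append (Walk.cons hbb q2)), fun z hz => ?_⟩
    rw [Walk.mem_support_append_iff] at hz
    rcases hz with hz | hz
    · have := hq1 z hz
      simp only [Set.mem_setOf_eq] at this
      rw [this]; exact hps _ (Walk.start_mem_support _)
    · rcases List.mem_cons.mp (by simpa [Walk.support_cons] using hz) with rfl | hz'
      · rw [hb]; exact hps _ (Walk.start_mem_support _)
      · exact hq2 z hz'

lemma connSet_preimage (he : PF.IsEpi B A f) (hm : PF.IsMonotone B f) {S : Set V}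
    (hS : ConnSet A S) : ConnSet B (f ⁻¹' S) := by
  intro x hx y hy
  obtain ⟨p, hp⟩ := hS (f x) hx (f y) hy
  obtain ⟨q, hq⟩ := lift_walk he hm p hp rfl rfl
  exact ⟨q, hq⟩

lemma btw_push (hA : A.IsTree) (hB : B.IsTree) (he : PF.IsEpi B A f)
    (hm : PF.IsMonotone B f) {a b c : W} (hb : b ∈ (tp hB a c).support) :
    f b ∈ (tp hA (f a) (f c)).support := by
  by_contra hfb
  have hne : f b ≠ f a := fun h => hfb (h ▸ start_mem_tp hA (f a) (f c))
  have hDa : f a ∈ {v | f b ∉ (tp hA (f a) v).support} := by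
    simp only [Set.mem_setOf_eq, tp_self_support]
    simpa using hne
  have hDc : f c ∈ {v | f b ∉ (tp hA (f a) v).support} := hfb
  have hconn := connSet_preimage he hm (connSet_side hA (f a) (f b))
  have hsub := tp_subset_of_connSet hB hconn (a := a) (b := c) hDa hDc
  have := hsub b hb
  simp only [Set.mem_preimage, Set.mem_setOf_eq] at this
  exact this (end_mem_tp hA (f a) (f b))

lemma map_walk (he : PF.IsEpi B A f) :
    ∀ {x y : W} (p : B.Walk x y),
      ∃ q : A.Walk (f x) (f y), ∀ z ∈ q.support, ∃ w ∈ p.support, f w = z := by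
  intro x y p
  induction p with
  | nil => exact ⟨Walk.nil, by simp⟩
  | @cons a c y h p ih =>
    obtain ⟨q, hq⟩ := ih
    rcases epi_push he h with heq | hadj
    · refine ⟨q.copy heq.symm rfl, fun z hz => ?_⟩
      rw [Walk.support_copy] at hz
      obtain ⟨w, hw, hfw⟩ := hq z hz
      exact ⟨w, by simp [Walk.support_cons, hw], hfw⟩
    · refine ⟨Walk.cons hadj q, fun z hz => ?_⟩
      rcases List.mem_cons.mp (by simpa [Walk.support_cons] using hz) with rfl | hz'
      · exact ⟨a, by simp [Walk.support_cons], rfl⟩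
      · obtain ⟨w, hw, hfw⟩ := hq z hz'
        exact ⟨w, by simp [Walk.support_cons, hw], hfw⟩

lemma tp_image (hA : A.IsTree) (hB : B.IsTree) (he : PF.IsEpi B A f) {x y : W} :
    ∀ z ∈ (tp hA (f x) (f y)).support, ∃ w ∈ (tp hB x y).support, f w = z := by
  classical
  obtain ⟨q, hq⟩ := map_walk he (tp hB x y)
  intro z hz
  have : q.bypass = tp hA (f x) (f y) := tp_eq hA _ q.bypass_isPath
  rw [← this] at hz
  exact hq z (q.support_bypass_subset hz)

end EpiLemmas

section InvSys
variable {C : ℕ → Type} [∀ n, Finite (C n)] (b : ∀ m n, C m → C n)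
  (Ts : ∀ n, Set (C n))

/-- images along the system -/
def img (n M : ℕ) : Set (C n) := b M n '' Ts M

variable (hcomp : ∀ k m n, n ≤ m → m ≤ k → ∀ x : C k, b m n (b k m x) = b k n x)
  (hne : ∀ n, (Ts n).Nonempty)
  (hmaps : ∀ m n, n ≤ m → Set.MapsTo (b m n) (Ts m) (Ts n))
  (hrefl : ∀ n x, b n n x = x)

set_option linter.unusedSectionVars false

include hcomp hmaps in
lemma img_anti {n M M' : ℕ} (h : n ≤ M) (h' : M ≤ M') :
    img b Ts n M' ⊆ img b Ts n M := by
  rintro x ⟨y, hy, rfl⟩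
  exact ⟨b M' M y, hmaps M' M h' hy, hcomp M' M n h h' y⟩

include hne in
lemma img_nonempty (n M : ℕ) : (img b Ts n M).Nonempty := (hne M).image _

include hcomp hne hmaps in
lemma exists_stable (n : ℕ) : ∃ M0, n ≤ M0 ∧ ∀ M, M0 ≤ M →
    img b Ts n M = img b Ts n M0 := by
  classical
  have hnonempty : {c : ℕ | ∃ M, n ≤ M ∧ (img b Ts n M).ncard = c}.Nonempty :=
    ⟨(img b Ts n n).ncard, n, le_rfl, rfl⟩
  obtain ⟨M0, h0, hcard⟩ := Nat.sInf_mem hnonempty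
  refine ⟨M0, h0, fun M h => ?_⟩
  refine Set.eq_of_subset_of_ncard_le (img_anti b Ts hcomp hmaps h0 h) ?_ (Set.toFinite _)
  rw [hcard]
  exact Nat.sInf_le ⟨M, h0.trans h, rfl⟩

/-- The eventual image. -/
noncomputable def Dset (n : ℕ) : Set (C n) :=
  img b Ts n (exists_stable b Ts hcomp hne hmaps n).choose

include hcomp hne hmaps in
lemma Dset_subset_img (n M : ℕ) (h : n ≤ M) :
    Dset b Ts hcomp hne hmaps n ⊆ img b Ts n M := by
  obtain ⟨h0, hstab⟩ := (exists_stable b Ts hcomp hne hmaps n).choose_spec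
  set M0 := (exists_stable b Ts hcomp hne hmaps n).choose
  rcases le_total M M0 with hle | hle
  · exact (img_anti b Ts hcomp hmaps h hle)
  · rw [Dset, ← hstab M hle]

include hcomp hne hmaps in
lemma Dset_nonempty (n : ℕ) : (Dset b Ts hcomp hne hmaps n).Nonempty :=
  img_nonempty b Ts hne _ _

include hcomp hne hmaps hrefl in
lemma Dset_subset_Ts (n : ℕ) : Dset b Ts hcomp hne hmaps n ⊆ Ts n := by
  intro x hx
  obtain ⟨y, hy, rfl⟩ := Dset_subset_img b Ts hcomp hne hmaps n n le_rfl hx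
  rwa [hrefl n y]

include hcomp hne hmaps in
lemma Dset_step (n : ℕ) (v : C n) (hv : v ∈ Dset b Ts hcomp hne hmaps n) :
    ∃ u ∈ Dset b Ts hcomp hne hmaps (n+1), b (n+1) n u = v := by
  obtain ⟨h1, hstab1⟩ := (exists_stable b Ts hcomp hne hmaps (n+1)).choose_spec
  set M1 := (exists_stable b Ts hcomp hne hmaps (n+1)).choose with hM1def
  obtain ⟨w, hw, hbw⟩ := Dset_subset_img b Ts hcomp hne hmaps n M1
    ((Nat.le_succ n).trans h1) hv
  refine ⟨b M1 (n+1) w, ⟨w, hw, rfl⟩, ?_⟩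
  rw [hcomp M1 (n+1) n (Nat.le_succ n) h1 w]
  exact hbw

include hcomp hne hmaps hrefl in
lemma invsys_engine :
    ∃ s : ∀ n, C n, (∀ n, s n ∈ Ts n) ∧ ∀ m n, n ≤ m → b m n (s m) = s n := by
  classical
  -- build the thread by recursion through the eventual images
  have step := Dset_step b Ts hcomp hne hmaps
  have hD0 := Dset_nonempty b Ts hcomp hne hmaps 0
  let s : ∀ n, {x : C n // x ∈ Dset b Ts hcomp hne hmaps n} :=
    fun n => Nat.rec ⟨hD0.some, hD0.some_mem⟩
      (fun n ih => ⟨(step n ih.1 ih.2).choose, (step n ih.1 ih.2).choose_spec.1⟩) n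
  have hstep : ∀ n, b (n+1) n (s (n+1)).1 = (s n).1 := by
    intro n
    exact (step n (s n).1 (s n).2).choose_spec.2
  refine ⟨fun n => (s n).1, fun n => Dset_subset_Ts b Ts hcomp hne hmaps hrefl n (s n).2, ?_⟩
  intro m n h
  induction m, h using Nat.le_induction with
  | base => exact hrefl n _
  | succ m hm ih =>
    show b (m+1) n (s (m+1)).1 = (s n).1
    rw [← hcomp (m+1) m n hm (Nat.le_succ m) (s (m+1)).1, hstep m]
    exact ih

end InvSys


section LimitLemmas
open PF
variable {T : PF.Family} {S : PF.FSeq T}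

/-- totalized bonding maps -/
noncomputable def tbond (S : PF.FSeq T) (e : PF.Limit S) (m n : ℕ) :
    Fin (S.F m).card → Fin (S.F n).card :=
  fun x => if h : n ≤ m then S.bond m n h x else e.1 n

lemma tbond_refl (e : PF.Limit S) (n : ℕ) (x : Fin (S.F n).card) : tbond S e n n x = x := by
  rw [tbond, dif_pos le_rfl]
  exact S.bond_refl n x

lemma tbond_eq (e : PF.Limit S) {m n : ℕ} (h : n ≤ m) (x : Fin (S.F m).card) :
    tbond S e m n x = S.bond m n h x := by
  rw [tbond, dif_pos h]

lemma tbond_comp (e : PF.Limit S) {k m n : ℕ} (h1 : n ≤ m) (h2 : m ≤ k)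
    (x : Fin (S.F k).card) : tbond S e m n (tbond S e k m x) = tbond S e k n x := by
  rw [tbond_eq e h2, tbond_eq e h1, tbond_eq e (h1.trans h2)]
  exact S.bond_comp k m n h1 h2 x

lemma exists_thread (e : PF.Limit S) (j : ℕ) (Ts : ∀ n, Set (Fin (S.F n).card))
    (hne : ∀ n, j ≤ n → (Ts n).Nonempty)
    (hmaps : ∀ m n (h : n ≤ m), j ≤ n → Set.MapsTo (S.bond m n h) (Ts m) (Ts n)) :
    ∃ x : PF.Limit S, ∀ n, j ≤ n → x.1 n ∈ Ts n := by
  classical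
  let Ts' : ∀ n, Set (Fin (S.F n).card) :=
    fun n => if h : j ≤ n then Ts n else tbond S e j n '' Ts j
  have hTs'pos : ∀ n (hn : j ≤ n), Ts' n = Ts n := fun n hn => dif_pos hn
  have hTs'neg : ∀ n (hn : ¬ j ≤ n), Ts' n = tbond S e j n '' Ts j := fun n hn => dif_neg hn
  have hmaps' : ∀ m n, n ≤ m → Set.MapsTo (tbond S e m n) (Ts' m) (Ts' n) := by
    intro m n h x hx
    by_cases hn : j ≤ n
    · have hm : j ≤ m := hn.trans h
      rw [hTs'pos n hn]
      rw [hTs'pos m hm] at hx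
      rw [tbond_eq e h]
      exact hmaps m n h hn hx
    · rw [hTs'neg n hn]
      by_cases hm : j ≤ m
      · rw [hTs'pos m hm] at hx
        refine ⟨S.bond m j hm x, hmaps m j hm (le_refl j) hx, ?_⟩
        rw [← tbond_eq e hm x, tbond_comp e (le_of_not_ge hn) hm]
      · rw [hTs'neg m hm] at hx
        obtain ⟨y, hy, rfl⟩ := hx
        exact ⟨y, hy, (tbond_comp e h (le_of_not_ge hm) y).symm⟩
  have hne' : ∀ n, (Ts' n).Nonempty := by
    intro n
    by_cases hn : j ≤ n
    · rw [hTs'pos n hn]; exact hne n hn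
    · rw [hTs'neg n hn]; exact (hne j le_rfl).image _
  obtain ⟨s, hmem, hcompat⟩ := invsys_engine (tbond S e) Ts'
    (fun k m n h1 h2 x => tbond_comp e h1 h2 x) hne' hmaps' (tbond_refl e)
  refine ⟨⟨s, fun m n h => ?_⟩, fun n hn => ?_⟩
  · rw [← tbond_eq e h (s m)]
    exact hcompat m n h
  · have := hmem n
    rw [hTs'pos n hn] at this
    exact this

lemma exists_thread_pair (e : PF.Limit S) (j : ℕ)
    (Ts : ∀ n, Set (Fin (S.F n).card × Fin (S.F n).card))
    (hne : ∀ n, j ≤ n → (Ts n).Nonempty)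
    (hmaps : ∀ m n (h : n ≤ m), j ≤ n →
      Set.MapsTo (fun p => (S.bond m n h p.1, S.bond m n h p.2)) (Ts m) (Ts n)) :
    ∃ x y : PF.Limit S, ∀ n, j ≤ n → (x.1 n, y.1 n) ∈ Ts n := by
  classical
  let bp : ∀ m n, (Fin (S.F m).card × Fin (S.F m).card) →
      (Fin (S.F n).card × Fin (S.F n).card) :=
    fun m n p => (tbond S e m n p.1, tbond S e m n p.2)
  have hbp_eq : ∀ m n (h : n ≤ m) p, bp m n p = (S.bond m n h p.1, S.bond m n h p.2) := by
    intro m n h p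
    show (tbond S e m n p.1, tbond S e m n p.2) = _
    rw [tbond_eq e h, tbond_eq e h]
  have hbp_comp : ∀ k m n, n ≤ m → m ≤ k → ∀ p, bp m n (bp k m p) = bp k n p := by
    intro k m n h1 h2 p
    show (tbond S e m n (tbond S e k m p.1), tbond S e m n (tbond S e k m p.2)) = _
    rw [tbond_comp e h1 h2, tbond_comp e h1 h2]
  let Ts' : ∀ n, Set (Fin (S.F n).card × Fin (S.F n).card) :=
    fun n => if h : j ≤ n then Ts n else bp j n '' Ts j
  have hTs'pos : ∀ n (hn : j ≤ n), Ts' n = Ts n := fun n hn => dif_pos hn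
  have hTs'neg : ∀ n (hn : ¬ j ≤ n), Ts' n = bp j n '' Ts j := fun n hn => dif_neg hn
  have hmaps' : ∀ m n, n ≤ m → Set.MapsTo (bp m n) (Ts' m) (Ts' n) := by
    intro m n h x hx
    by_cases hn : j ≤ n
    · have hm : j ≤ m := hn.trans h
      rw [hTs'pos n hn]
      rw [hTs'pos m hm] at hx
      rw [hbp_eq m n h x]
      exact hmaps m n h hn hx
    · rw [hTs'neg n hn]
      by_cases hm : j ≤ m
      · rw [hTs'pos m hm] at hx
        refine ⟨bp m j x, ?_, hbp_comp m j n (le_of_not_ge hn) hm x⟩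
        rw [hbp_eq m j hm x]
        exact hmaps m j hm (le_refl j) hx
      · rw [hTs'neg m hm] at hx
        obtain ⟨y, hy, rfl⟩ := hx
        exact ⟨y, hy, (hbp_comp j m n h (le_of_not_ge hm) y).symm⟩
  have hne' : ∀ n, (Ts' n).Nonempty := by
    intro n
    by_cases hn : j ≤ n
    · rw [hTs'pos n hn]; exact hne n hn
    · rw [hTs'neg n hn]; exact (hne j le_rfl).image _
  obtain ⟨s, hmem, hcompat⟩ := invsys_engine bp Ts'
    (fun k m n h1 h2 x => hbp_comp k m n h1 h2 x) hne' hmaps'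
    (fun n x => by
      show (tbond S e n n x.1, tbond S e n n x.2) = x
      rw [tbond_refl e, tbond_refl e])
  refine ⟨⟨fun n => (s n).1, fun m n h => ?_⟩, ⟨fun n => (s n).2, fun m n h => ?_⟩,
    fun n hn => ?_⟩
  · have := congrArg Prod.fst (hcompat m n h)
    rw [hbp_eq m n h (s m)] at this
    exact this
  · have := congrArg Prod.snd (hcompat m n h)
    rw [hbp_eq m n h (s m)] at this
    exact this
  · have := hmem n
    rw [hTs'pos n hn] at this
    exact this

end LimitLemmas


section LimitTopology
open PF
variable {T : PF.Family} {S : PF.FSeq T}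

lemma coord_continuous (n : ℕ) : Continuous (fun x : PF.Limit S => x.1 n) :=
  (continuous_apply n).comp continuous_subtype_val

lemma isClosed_coordSet (n : ℕ) (P : Set (Fin (S.F n).card)) :
    IsClosed {x : PF.Limit S | x.1 n ∈ P} :=
  (isClosed_discrete P).preimage (coord_continuous n)

lemma isOpen_coordSet (n : ℕ) (P : Set (Fin (S.F n).card)) :
    IsOpen {x : PF.Limit S | x.1 n ∈ P} :=
  (isOpen_discrete P).preimage (coord_continuous n)

lemma exists_coord_nhd {U : Set (PF.Limit S)} (hU : IsOpen U) {x : PF.Limit S}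
    (hx : x ∈ U) (N : ℕ) :
    ∃ J, N ≤ J ∧ ∀ y : PF.Limit S, y.1 J = x.1 J → y ∈ U := by
  change @IsOpen (PF.Limit S)
    (TopologicalSpace.induced (fun y : PF.Limit S => (y.1 : ∀ n, Fin (S.F n).card)) inferInstance) U at hU
  rw [isOpen_induced_iff] at hU
  obtain ⟨W, hW, rfl⟩ := hU
  obtain ⟨I, u, hIu, hpi⟩ := isOpen_pi_iff.mp hW x.1 hx
  refine ⟨max (I.sup id) N, le_max_right _ _, fun y hy => ?_⟩
  have : y.1 ∈ (↑I : Set ℕ).pi u := by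
    intro i hi
    have hiJ : i ≤ max (I.sup id) N :=
      le_trans (Finset.le_sup (f := id) hi) (le_max_left _ _)
    have h1 : y.1 i = x.1 i := by
      rw [← y.2 _ _ hiJ, ← x.2 _ _ hiJ, hy]
    rw [h1]
    exact (hIu i hi).2
  exact hpi this

lemma limit_compactSpace : CompactSpace (PF.Limit S) := by
  have hcl : IsClosed {x : ∀ n, Fin (S.F n).card |
      ∀ m n (h : n ≤ m), S.bond m n h (x m) = x n} := by
    have heq : {x : ∀ n, Fin (S.F n).card | ∀ m n (h : n ≤ m), S.bond m n h (x m) = x n}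
        = ⋂ (m : ℕ), ⋂ (n : ℕ), ⋂ (_ : n ≤ m), {x | S.bond m n ‹n ≤ m› (x m) = x n} := by
      ext x
      simp only [Set.mem_setOf_eq, Set.mem_iInter]
    rw [heq]
    refine isClosed_iInter fun m => isClosed_iInter fun n => isClosed_iInter fun h => ?_
    exact isClosed_eq ((continuous_of_discreteTopology).comp (continuous_apply m))
      (continuous_apply n)
  exact isCompact_iff_compactSpace.mp hcl.isCompact

end LimitTopology


section SplitLemmas
open PF

lemma splitMap_last {k : ℕ} (c : Fin k) : PF.splitMap c (Fin.last k) = c := by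
  simp [PF.splitMap]

lemma splitMap_castSucc {k : ℕ} (c y : Fin k) : PF.splitMap c y.castSucc = y := by
  simp [PF.splitMap]

lemma splitMap_fiber {k : ℕ} {c : Fin k} {u : Fin (k+1)} {v : Fin k}
    (h : PF.splitMap c u = v) (hvc : v ≠ c) : u = v.castSucc := by
  cases u using Fin.lastCases with
  | last => rw [splitMap_last] at h; exact absurd h.symm hvc
  | cast y => rw [splitMap_castSucc] at h; rw [h]

lemma splitGraph_adj_last_left {k : ℕ} {A : SimpleGraph (Fin k)} {a b : Fin k} :
    (PF.splitGraph A a b).Adj (Fin.last k) a.castSucc := by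
  rw [PF.splitGraph, SimpleGraph.fromRel_adj]
  exact ⟨(Fin.castSucc_lt_last a).ne', Or.inl (Or.inr ⟨rfl, Or.inl rfl⟩)⟩

lemma splitGraph_not_adj {k : ℕ} {A : SimpleGraph (Fin k)} {a b : Fin k} :
    ¬ (PF.splitGraph A a b).Adj a.castSucc b.castSucc := by
  intro h
  rw [PF.splitGraph, SimpleGraph.fromRel_adj] at h
  obtain ⟨hne, h⟩ := h
  rcases h with h | h
  · rcases h with ⟨x', y', hx, hy, _, hnab, _⟩ | ⟨hlast, _⟩
    · exact hnab ⟨(Fin.castSucc_injective _ hx.symm), (Fin.castSucc_injective _ hy.symm)⟩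
    · exact absurd hlast (Fin.castSucc_lt_last a).ne
  · rcases h with ⟨x', y', hx, hy, _, _, hnba⟩ | ⟨hlast, _⟩
    · exact hnba ⟨(Fin.castSucc_injective _ hx.symm), (Fin.castSucc_injective _ hy.symm)⟩
    · exact (Fin.castSucc_lt_last b).ne hlast
end SplitLemmas

section FarSide
open PF
variable {T : PF.Family} {S : PF.FSeq T}

lemma exists_far_side (hT : PF.IsPFF T)
    (hwc : ∀ (A B : PF.FGraph) (f : Fin B.card → Fin A.card), T.mor A B f →
      PF.IsMonotone B.graph f ∧ PF.WeaklyCoherent A.graph B.graph f)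
    (hsplit : PF.AllowsSplitting T) (hS : PF.IsFraisseSeq T S)
    (e f : PF.Limit S) (hef : PF.EdgeRel S e f) (n₀ : ℕ)
    (hne : ∀ l, n₀ ≤ l → e.1 l ≠ f.1 l) :
    ∃ N, n₀ ≤ N ∧ ∃ w, (S.F N).graph.Adj w (e.1 N) ∧ w ≠ f.1 N := by
  by_contra hcon
  push_neg at hcon
  -- every neighbour of e.1 l equals f.1 l, for all l ≥ n₀
  have hB : ∀ l, n₀ ≤ l → ∀ w, (S.F l).graph.Adj w (e.1 l) → w = f.1 l := by
    intro l hl w hw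
    by_contra hwf
    exact hwf (by
      rcases hcon l hl w hw with h
      exact h)
  have hobj : ∀ n, T.obj (S.F n) := fun n => (hT.mor_obj _ _ _ (S.bond_mor n n le_rfl)).1
  have hadj : ∀ l, n₀ ≤ l → (S.F l).graph.Adj (e.1 l) (f.1 l) := by
    intro l hl
    rcases hef l with h | h
    · exact absurd h (hne l hl)
    · exact h
  set n := n₀
  set A' : PF.FGraph := ⟨(S.F n).card + 1,
    PF.splitGraph (S.F n).graph (e.1 n) (f.1 n)⟩ with hA'
  obtain ⟨hobjA, hmor1, _⟩ := hsplit (S.F n) (e.1 n) (f.1 n) (hobj n) (hadj n le_rfl)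
  obtain ⟨m, hm, g, hgmor, hcomm⟩ := hS.extend n A' (PF.splitMap (e.1 n)) hmor1
  have hepiA : PF.IsEpi (S.F m).graph A'.graph g := hT.mor_epi _ _ _ hgmor
  have hmonoA : PF.IsMonotone (S.F m).graph g := (hwc _ _ _ hgmor).1
  have hcomm' : ∀ x, PF.splitMap (e.1 n) (g x) = S.bond m n hm x := fun x => congrFun hcomm x
  have hgf : g (f.1 m) = (f.1 n).castSucc := by
    apply splitMap_fiber (c := e.1 n)
    · rw [hcomm' (f.1 m)]
      exact f.2 m n hm
    · exact hne n le_rfl |>.symm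
  have hgem : g (e.1 m) = Fin.last _ := by
    rcases Fin.eq_castSucc_or_eq_last (g (e.1 m)) with ⟨y, hge⟩ | hlast
    · exfalso
      have hy : y = e.1 n := by
        have := hcomm' (e.1 m)
        rw [hge, splitMap_castSucc] at this
        rw [this]
        exact e.2 m n hm
      subst hy
      have hadjm : (S.F m).graph.Adj (e.1 m) (f.1 m) := hadj m hm
      rcases epi_push hepiA hadjm with heq | hA
      · rw [hge, hgf] at heq
        exact hne n le_rfl (Fin.castSucc_injective _ heq)
      · rw [hge, hgf] at hA
        exact splitGraph_not_adj hA
    · exact hlast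
  -- the fiber of the new vertex is exactly {e.1 m}
  have hfiber : ∀ u, g u = Fin.last _ → u = e.1 m := by
    have key : ∀ (u' v : Fin (S.F m).card) (q : (S.F m).graph.Walk u' v),
        u' = e.1 m → (∀ x ∈ q.support, x ∈ {w | g w = Fin.last (S.F n).card}) →
        v = e.1 m := by
      intro u' v q
      cases q with
      | nil => intro h _; exact h
      | @cons u c w h q =>
        intro hu' hs
        exfalso
        have hc : c = f.1 m := hB m hm c (by rw [← hu']; exact h.symm)
        have hmem : c ∈ (SimpleGraph.Walk.cons h q).support := by
          rw [SimpleGraph.Walk.support_cons]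
          exact List.mem_cons_of_mem _ (SimpleGraph.Walk.start_mem_support q)
        have hcl := hs c hmem
        rw [hc] at hcl
        simp only [Set.mem_setOf_eq] at hcl
        rw [hgf] at hcl
        exact (Fin.castSucc_lt_last (f.1 n)).ne hcl
    intro u hu
    have hconn := mono_fiber_connSet hmonoA (Fin.last (S.F n).card)
    obtain ⟨p, hp⟩ := hconn (e.1 m) hgem u hu
    exact key (e.1 m) u p rfl hp
  -- the new vertex is adjacent to (e.1 n).castSucc in A'
  have hAadj : A'.graph.Adj (Fin.last (S.F n).card) ((e.1 n).castSucc) :=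
    splitGraph_adj_last_left
  obtain ⟨p, q, hp, hq, hpq⟩ := epi_lift hepiA hAadj
  have hpe : p = e.1 m := hfiber p hp
  have hqf : q = f.1 m := hB m hm q (by rw [← hpe]; exact hpq.symm)
  rw [hqf, hgf] at hq
  exact hne n le_rfl (Fin.castSucc_injective _ hq.symm)

end FarSide

end PFProof






/-- Let `𝒯` be a projective Fraïssé family of finite trees with weakly
coherent (monotone) epimorphisms that allows splitting edges, and let `𝔽` be its
projective Fraïssé limit.  If `e` is an endpoint of the topological graph `𝔽`, then
there is no `f ∈ 𝔽 ∖ {e}` with `⟨e,f⟩ ∈ E(𝔽)`. -/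
theorem endpoint_edge_only_itself (T : PF.Family) (hT : PF.IsPFF T)
    (htree : ∀ A : PF.FGraph, T.obj A → A.graph.IsTree)
    (hwc : ∀ (A B : PF.FGraph) (f : Fin B.card → Fin A.card), T.mor A B f →
      PF.IsMonotone B.graph f ∧ PF.WeaklyCoherent A.graph B.graph f)
    (hsplit : PF.AllowsSplitting T)
    (S : PF.FSeq T) (hS : PF.IsFraisseSeq T S)
    (e : PF.Limit S) (he : PF.GraphEndpoint (PF.Limit S) (PF.limitGraph S) e) :
    ¬ ∃ f : PF.Limit S, f ≠ e ∧ PF.EdgeRel S e f := by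
  rintro ⟨f, hfe, hef⟩
  classical
  open PFProof in
  have hobj : ∀ n, T.obj (S.F n) := fun n => (hT.mor_obj _ _ _ (S.bond_mor n n le_rfl)).1
  have htr : ∀ n, (S.F n).graph.IsTree := fun n => htree _ (hobj n)
  have hepi : ∀ m n (h : n ≤ m), PF.IsEpi (S.F m).graph (S.F n).graph (S.bond m n h) :=
    fun m n h => hT.mor_epi _ _ _ (S.bond_mor m n h)
  have hmono : ∀ m n (h : n ≤ m), PF.IsMonotone (S.F m).graph (S.bond m n h) :=
    fun m n h => (hwc _ _ _ (S.bond_mor m n h)).1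
  obtain ⟨n₁, hn₁⟩ : ∃ n, e.1 n ≠ f.1 n := by
    by_contra hcon
    push_neg at hcon
    exact hfe (Subtype.ext (funext fun n => (hcon n).symm))
  have hne : ∀ l, n₁ ≤ l → e.1 l ≠ f.1 l := by
    intro l hl heq
    exact hn₁ (by rw [← e.2 l n₁ hl, ← f.2 l n₁ hl, heq])
  have hadj : ∀ l, n₁ ≤ l → (S.F l).graph.Adj (e.1 l) (f.1 l) := by
    intro l hl
    rcases hef l with h | h
    · exact absurd h (hne l hl)
    · exact h
  obtain ⟨N, hNn₁, w₀, hw₀adj, hw₀f⟩ :=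
    exists_far_side hT hwc hsplit hS e f hef n₁ hne
  have hneN : ∀ l, N ≤ l → e.1 l ≠ f.1 l := fun l hl => hne l (hNn₁.trans hl)
  have hadjN : ∀ l, N ≤ l → (S.F l).graph.Adj (e.1 l) (f.1 l) :=
    fun l hl => hadj l (hNn₁.trans hl)
  -- a thread through the far-side vertex w₀
  obtain ⟨mth, hmth⟩ := exists_thread e N (fun n => {v | tbond S e n N v = w₀})
    (fun n hn => by
      obtain ⟨u, hu⟩ := (hepi n N hn).1 w₀
      exact ⟨u, by rw [Set.mem_setOf_eq, tbond_eq e hn]; exact hu⟩)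
    (fun m' n h hn v hv => by
      rw [Set.mem_setOf_eq] at hv ⊢
      rw [← tbond_eq e h v, tbond_comp e hn h v]
      exact hv)
  have hmthN : mth.1 N = w₀ := by
    have := hmth N le_rfl
    rwa [Set.mem_setOf_eq, tbond_refl e] at this
  -- the invariant : f never lies on the path from mth to e
  have hInv : ∀ l, N ≤ l → f.1 l ∉ (tp (htr l) (mth.1 l) (e.1 l)).support := by
    intro l hl
    induction l, hl using Nat.le_induction with
    | base =>
      rw [hmthN, tp_adj_support (htr N) hw₀adj]
      intro hmem
      rcases List.mem_cons.mp hmem with h | h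
      · exact hw₀f h.symm
      · rw [List.mem_singleton] at h
        exact hneN N le_rfl h.symm
    | succ l hl ih =>
      intro hmem
      apply ih
      have := btw_push (htr l) (htr (l+1)) (hepi (l+1) l (Nat.le_succ l))
        (hmono (l+1) l (Nat.le_succ l)) hmem
      rwa [mth.2 (l+1) l (Nat.le_succ l), e.2 (l+1) l (Nat.le_succ l),
        f.2 (l+1) l (Nat.le_succ l)] at this
  -- path system facts
  have hPstruct : ∀ l (hl : N ≤ l), (tp (htr l) (mth.1 l) (f.1 l)).support
      = (tp (htr l) (mth.1 l) (e.1 l)).support ++ [f.1 l] :=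
    fun l hl => tp_append_edge (htr l) (hadjN l hl) (hInv l hl)
  have heP : ∀ l (hl : N ≤ l), e.1 l ∈ (tp (htr l) (mth.1 l) (f.1 l)).support := by
    intro l hl
    rw [hPstruct l hl]
    exact List.mem_append_left _ (end_mem_tp _ _ _)
  have hbondP : ∀ l l' (h : l ≤ l') (_ : N ≤ l),
      ∀ v ∈ (tp (htr l') (mth.1 l') (f.1 l')).support,
      S.bond l' l h v ∈ (tp (htr l) (mth.1 l) (f.1 l)).support := by
    intro l l' h hl v hv
    have := btw_push (htr l) (htr l') (hepi l' l h) (hmono l' l h) hv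
    rwa [mth.2 l' l h, f.2 l' l h] at this
  have hontoP : ∀ l l' (h : l ≤ l'), ∀ v ∈ (tp (htr l) (mth.1 l) (f.1 l)).support,
      ∃ u ∈ (tp (htr l') (mth.1 l') (f.1 l')).support, S.bond l' l h u = v := by
    intro l l' h v hv
    have himg := tp_image (htr l) (htr l') (hepi l' l h) (x := mth.1 l') (y := f.1 l')
    rw [mth.2 l' l h, f.2 l' l h] at himg
    obtain ⟨w, hw, hfw⟩ := himg v hv
    exact ⟨w, hw, hfw⟩
  have hsurjP : ∀ j, N ≤ j → ∀ v, v ∈ (tp (htr j) (mth.1 j) (f.1 j)).support →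
      ∃ x : PF.Limit S, (∀ l, N ≤ l → x.1 l ∈ (tp (htr l) (mth.1 l) (f.1 l)).support)
        ∧ x.1 j = v := by
    intro j hjN v hv
    obtain ⟨x, hx⟩ := exists_thread e j
      (fun l => {u | u ∈ (tp (htr l) (mth.1 l) (f.1 l)).support ∧ tbond S e l j u = v})
      (fun l hl => by
        obtain ⟨u, hu, hbu⟩ := hontoP j l hl v hv
        exact ⟨u, hu, by rw [tbond_eq e hl]; exact hbu⟩)
      (fun m' n h hn u hu => by
        obtain ⟨hu1, hu2⟩ := hu
        refine ⟨hbondP n m' h (hjN.trans hn) u hu1, ?_⟩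
        rw [← tbond_eq e h u, tbond_comp e hn h]
        exact hu2)
    have hxj : x.1 j = v := by
      have := (hx j le_rfl).2
      rwa [tbond_refl e] at this
    refine ⟨x, ?_, hxj⟩
    intro l hl
    rcases le_or_gt j l with hjl | hjl
    · exact (hx l hjl).1
    · have hxl : x.1 l = S.bond j l hjl.le (x.1 j) := (x.2 j l hjl.le).symm
      rw [hxl]
      exact hbondP l j hjl.le hl (x.1 j) (by rw [hxj]; exact hv)
  -- the arc subset of the limit
  set XS : Set (PF.Limit S) :=
    {x | ∀ l, N ≤ l → x.1 l ∈ (tp (htr l) (mth.1 l) (f.1 l)).support} with hXSdef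
  have heXS : e ∈ XS := fun l hl => heP l hl
  have hfXS : f ∈ XS := fun l _ => end_mem_tp _ _ _
  have hmXS : mth ∈ XS := fun l _ => start_mem_tp _ _ _
  have hisclXS : IsClosed XS := by
    have hXS2 : XS = ⋂ (l : ℕ), ⋂ (_ : N ≤ l),
        {x : PF.Limit S | x.1 l ∈ {v | v ∈ (tp (htr l) (mth.1 l) (f.1 l)).support}} := by
      ext x
      simp only [hXSdef, Set.mem_setOf_eq, Set.mem_iInter]
    rw [hXS2]
    exact isClosed_iInter fun l => isClosed_iInter fun _ => isClosed_coordSet l _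
  have hmth_ne_e : mth ≠ e := by
    intro h
    have hww : w₀ = e.1 N := by rw [← hmthN, h]
    rw [hww] at hw₀adj
    exact (S.F N).graph.loopless.irrefl _ hw₀adj
  have hmth_ne_f : mth ≠ f := fun h => hw₀f (by rw [← hmthN, h])
  have he_ne_f : e ≠ f := fun h => hfe h.symm
  -- coordinates determine: if two limit points agree at high level they agree below
  have hcoord_le : ∀ (x y : PF.Limit S) (l n : ℕ) (h : n ≤ l), x.1 l = y.1 l →
      x.1 n = y.1 n := by
    intro x y l n h hxy
    rw [← x.2 l n h, ← y.2 l n h, hxy]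
  have hdiff_up : ∀ (x y : PF.Limit S), x ≠ y → ∀ n, ∃ l, n ≤ l ∧ x.1 l ≠ y.1 l := by
    intro x y hxy n
    obtain ⟨j, hj⟩ : ∃ j, x.1 j ≠ y.1 j := by
      by_contra hcon
      push_neg at hcon
      exact hxy (Subtype.ext (funext hcon))
    refine ⟨max j n, le_max_right _ _, fun hmax => hj ?_⟩
    exact hcoord_le x y (max j n) j (le_max_left _ _) hmax
  -- the subtype carrying the arc
  set XT := {x : PF.Limit S // x ∈ XS} with hXT
  set H : SimpleGraph XT := SimpleGraph.comap (Subtype.val) (PF.limitGraph S) with hHdef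
  have hcompactL : CompactSpace (PF.Limit S) := limit_compactSpace
  have hcompactXT : CompactSpace XT := isCompact_iff_compactSpace.mp hisclXS.isCompact
  -- the cut: removing any point of XS other than mth and f disconnects
  have hcut : ∀ (a : PF.Limit S) (haXS : a ∈ XS), a ≠ mth → a ≠ f →
      ¬ PF.GraphConnDel XT H ⟨a, haXS⟩ := by
    intro a haXS hamth haf hcon
    apply hcon
    set C : Set (PF.Limit S) :=
      {x | ∀ l, N ≤ l → a.1 l ∈ (tp (htr l) (x.1 l) (f.1 l)).support} with hCdef
    have hCclosed : IsClosed C := by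
      have hC2 : C = ⋂ (l : ℕ), ⋂ (_ : N ≤ l),
          {x : PF.Limit S | x.1 l ∈ {v | a.1 l ∈ (tp (htr l) v (f.1 l)).support}} := by
        ext x
        simp only [hCdef, Set.mem_setOf_eq, Set.mem_iInter]
      rw [hC2]
      exact isClosed_iInter fun l => isClosed_iInter fun _ => isClosed_coordSet l _
    have hvvcont : Continuous (fun y : {v : XT // v ≠ (⟨a, haXS⟩ : XT)} => y.1.1) :=
      continuous_subtype_val.comp continuous_subtype_val
    -- C-membership is determined by any single high coordinate agreeing
    have hCdet : ∀ (y z : PF.Limit S), y ∈ C → z ∈ XS → ∀ J, N ≤ J → y.1 J ≠ a.1 J →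
        z.1 J = y.1 J → z ∈ C := by
      intro y z hyC hzXS J hJN hJa hzy
      intro l hl
      rcases le_or_gt l J with hlJ | hlJ
      · have : z.1 l = y.1 l := hcoord_le z y J l hlJ hzy
        rw [this]
        exact hyC l hl
      · by_contra hnot
        have hzP : z.1 l ∈ (tp (htr l) (mth.1 l) (f.1 l)).support := hzXS l hl
        have haP : a.1 l ∈ (tp (htr l) (mth.1 l) (f.1 l)).support := haXS l hl
        have hsplit := tp_mem_split (htr l) hzP haP
        have h1 : a.1 l ∈ (tp (htr l) (mth.1 l) (z.1 l)).support := by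
          rcases hsplit with h | h
          · exact h
          · exact absurd h hnot
        have hJl : J ≤ l := hlJ.le
        have h1' := btw_push (htr J) (htr l) (hepi l J hJl) (hmono l J hJl) h1
        rw [mth.2 l J hJl, a.2 l J hJl, z.2 l J hJl, hzy] at h1'
        have h2' : a.1 J ∈ (tp (htr J) (y.1 J) (f.1 J)).support := hyC J hJN
        have hyP : y.1 J ∈ (tp (htr J) (mth.1 J) (f.1 J)).support := by
          have hzP' : z.1 J ∈ (tp (htr J) (mth.1 J) (f.1 J)).support := hzXS J hJN
          rwa [hzy] at hzP'
        exact hJa (tp_inter_split (htr J) hyP h1' h2').symm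
    refine ⟨{y | y.1.1 ∈ C}, {y | y.1.1 ∉ C}, ?_, ?_, ?_, ?_, ?_, ?_, ?_⟩
    · exact hCclosed.preimage hvvcont
    · have hopen : IsOpen {y : {v : XT // v ≠ (⟨a, haXS⟩ : XT)} | y.1.1 ∈ C} := by
        rw [isOpen_iff_forall_mem_open]
        intro y hy
        have hyne : y.1.1 ≠ a := by
          intro h
          exact y.2 (Subtype.ext h)
        obtain ⟨J, hJN, hJa⟩ := hdiff_up y.1.1 a hyne N
        refine ⟨{z | z.1.1.1 J = y.1.1.1 J}, ?_, ?_, rfl⟩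
        · intro z hz
          simp only [Set.mem_setOf_eq] at hz ⊢
          exact hCdet y.1.1 z.1.1 hy z.1.2 J hJN hJa hz
        · exact (isOpen_coordSet J {v | v = y.1.1.1 J}).preimage hvvcont
      have : {y : {v : XT // v ≠ (⟨a, haXS⟩ : XT)} | y.1.1 ∉ C}
          = {y | y.1.1 ∈ C}ᶜ := by
        ext y
        simp [Set.mem_compl_iff]
      rw [this]
      exact hopen.isClosed_compl
    · refine ⟨⟨⟨mth, hmXS⟩, ?_⟩, ?_⟩
      · intro h
        exact hamth.symm (congrArg Subtype.val h)
      · intro l hl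
        exact haXS l hl
    · refine ⟨⟨⟨f, hfXS⟩, ?_⟩, ?_⟩
      · intro h
        exact haf.symm (congrArg Subtype.val h)
      · obtain ⟨J, hJN, hJa⟩ := hdiff_up a f haf N
        intro hC
        have := hC J hJN
        rw [tp_self_support] at this
        rw [List.mem_singleton] at this
        exact hJa this
    · rw [Set.disjoint_left]
      intro y hy hy'
      exact hy' hy
    · ext y
      simp only [Set.mem_union, Set.mem_setOf_eq, Set.mem_univ, iff_true]
      exact em _
    · intro u hu v hv hAdj
      obtain ⟨hne_uv, hEdge⟩ := (show (u.1.1 : PF.Limit S) ≠ v.1.1 ∧ PF.EdgeRel S u.1.1 v.1.1 from hAdj)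
      simp only [Set.mem_setOf_eq] at hu hv
      obtain ⟨l₀, hl₀N, hl₀⟩ : ∃ l, N ≤ l ∧ a.1 l ∉ (tp (htr l) (v.1.1.1 l) (f.1 l)).support := by
        by_contra hcon2
        push_neg at hcon2
        exact hv hcon2
      have claim : ∀ l, l₀ ≤ l → a.1 l ∉ (tp (htr l) (v.1.1.1 l) (f.1 l)).support := by
        intro l h hcontra
        apply hl₀
        have := btw_push (htr l₀) (htr l) (hepi l l₀ h) (hmono l l₀ h) hcontra
        rwa [v.1.1.2 l l₀ h, a.2 l l₀ h, f.2 l l₀ h] at this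
      have claim2 : ∀ l, l₀ ≤ l → a.1 l = u.1.1.1 l := by
        intro l h
        have hlN : N ≤ l := hl₀N.trans h
        rcases hEdge l with heq | hadj'
        · exfalso
          apply claim l h
          rw [← heq]
          exact hu l hlN
        · exact edge_side (htr l) hadj' (hu l hlN) (claim l h)
      have hau : a = u.1.1 := by
        refine Subtype.ext (funext fun n => ?_)
        exact hcoord_le a u.1.1 (max n l₀) n (le_max_left _ _)
          (claim2 (max n l₀) (le_max_right _ _))
      exact u.2 (Subtype.ext hau.symm)
  -- connectivity of the arc
  have hconn : PF.GraphConn XT H := by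
    have key : ∀ (s t : Set XT), IsClosed s → IsClosed t → s.Nonempty → t.Nonempty →
        Disjoint s t → s ∪ t = Set.univ → (∀ a ∈ s, ∀ b ∈ t, ¬ H.Adj a b) →
        (⟨mth, hmXS⟩ : XT) ∈ s → False := by
      intro s t hscl htcl hsne htne hdisj hcover hnoedge hms
      set Ss : ∀ l : ℕ, Set (Fin (S.F l).card) :=
        fun l => {v | ∃ x ∈ s, x.1.1 l = v} with hSsdef
      set Tt : ∀ l : ℕ, Set (Fin (S.F l).card) :=
        fun l => {v | ∃ x ∈ t, x.1.1 l = v} with hTtdef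
      have hSsP : ∀ l, N ≤ l → ∀ v ∈ Ss l, v ∈ (tp (htr l) (mth.1 l) (f.1 l)).support := by
        rintro l hl v ⟨x, _, rfl⟩
        exact x.2 l hl
      have hTtP : ∀ l, N ≤ l → ∀ v ∈ Tt l, v ∈ (tp (htr l) (mth.1 l) (f.1 l)).support := by
        rintro l hl v ⟨x, _, rfl⟩
        exact x.2 l hl
      -- a limit point built from coordinates in a closed set is in that set
      have hclosure : ∀ (u : Set XT), IsClosed u → ∀ (z : PF.Limit S) (hzXS : z ∈ XS),
          (∀ l, N ≤ l → ∃ x ∈ u, x.1.1 l = z.1 l) → (⟨z, hzXS⟩ : XT) ∈ u := by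
        intro u hu z hzXS hz
        rw [← hu.closure_eq]
        rw [mem_closure_iff]
        intro O hO hzO
        rw [isOpen_induced_iff] at hO
        obtain ⟨U, hU, rfl⟩ := hO
        obtain ⟨J, hJN, hJ⟩ := exists_coord_nhd hU hzO N
        obtain ⟨x, hxu, hxJ⟩ := hz J hJN
        exact ⟨x, hJ x.1 (by rw [hxJ]), hxu⟩
      -- find a level where the coordinate images of s and t are disjoint
      have hdisjlvl : ∃ j, N ≤ j ∧ ∀ v, v ∈ Ss j → v ∈ Tt j → False := by
        by_contra hcon2
        push_neg at hcon2
        obtain ⟨z, hz⟩ := exists_thread e N (fun l => Ss l ∩ Tt l)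
          (fun l hl => by
            obtain ⟨v, hv1, hv2⟩ := hcon2 l hl
            exact ⟨v, hv1, hv2.1⟩)
          (fun m' n h hn v hv => by
            obtain ⟨⟨x1, hx1, hc1⟩, ⟨x2, hx2, hc2⟩⟩ := hv
            constructor
            · exact ⟨x1, hx1, by rw [← hc1]; exact (x1.1.2 m' n h).symm⟩
            · exact ⟨x2, hx2, by rw [← hc2]; exact (x2.1.2 m' n h).symm⟩)
        have hzXS : z ∈ XS := by
          intro l hl
          exact hSsP l hl _ (hz l hl).1
        have hzs : (⟨z, hzXS⟩ : XT) ∈ s := by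
          apply hclosure s hscl z hzXS
          intro l hl
          obtain ⟨x, hx, hc⟩ := (hz l hl).1
          exact ⟨x, hx, hc⟩
        have hzt : (⟨z, hzXS⟩ : XT) ∈ t := by
          apply hclosure t htcl z hzXS
          intro l hl
          obtain ⟨x, hx, hc⟩ := (hz l hl).2
          exact ⟨x, hx, hc⟩
        exact (Set.disjoint_left.mp hdisj hzs) hzt
      obtain ⟨j, hjN, hdisjj⟩ := hdisjlvl
      have hdet_s : ∀ x : XT, x.1.1 j ∈ Ss j → x ∈ s := by
        intro x hx
        rcases (by rw [hcover]; exact Set.mem_univ x : x ∈ s ∪ t) with h | h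
        · exact h
        · exact absurd hx (fun hx' => hdisjj _ hx' ⟨x, h, rfl⟩)
      have hdet_t : ∀ x : XT, x.1.1 j ∈ Tt j → x ∈ t := by
        intro x hx
        rcases (by rw [hcover]; exact Set.mem_univ x : x ∈ s ∪ t) with h | h
        · exact absurd hx (fun hx' => hdisjj _ ⟨x, h, rfl⟩ hx')
        · exact h
      -- crossing at level j
      have hm_in : mth.1 j ∈ Ss j := ⟨⟨mth, hmXS⟩, hms, rfl⟩
      have hout : ∃ w ∈ (tp (htr j) (mth.1 j) (f.1 j)).support, w ∉ Ss j := by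
        obtain ⟨y, hy⟩ := htne
        refine ⟨y.1.1 j, y.2 j hjN, fun hmem => ?_⟩
        exact (Set.disjoint_left.mp hdisj (hdet_s y hmem)) hy
      obtain ⟨u', v', hadj_uv, hu'S, hv'nS, hsupp_eq⟩ :=
        crossing_path_split (htr j) hm_in hout
      have hnd := (tp_isPath (htr j) (mth.1 j) (f.1 j)).2
      rw [hsupp_eq] at hnd
      have hpdisj : ∀ z, z ∈ (tp (htr j) (mth.1 j) u').support →
          z ∈ (tp (htr j) v' (f.1 j)).support → False :=
        fun z h1 h2 => (List.disjoint_of_nodup_append hnd) h1 h2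
      have hv'P : v' ∈ (tp (htr j) (mth.1 j) (f.1 j)).support := by
        rw [hsupp_eq]
        exact List.mem_append_right _ (start_mem_tp _ _ _)
      obtain ⟨xv, hxvXS, hxvj⟩ := hsurjP j hjN v' hv'P
      have hv'T : v' ∈ Tt j := by
        rcases (by rw [hcover]; exact Set.mem_univ (⟨xv, hxvXS⟩ : XT) :
            (⟨xv, hxvXS⟩ : XT) ∈ s ∪ t) with h | h
        · exact absurd (⟨⟨xv, hxvXS⟩, h, hxvj⟩ : v' ∈ Ss j) hv'nS
        · exact ⟨⟨xv, hxvXS⟩, h, hxvj⟩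
      -- a pair of adjacent threads over the crossing edge
      obtain ⟨x, y, hxy⟩ := exists_thread_pair e j (fun l =>
        {pq | pq.1 ∈ (tp (htr l) (mth.1 l) (f.1 l)).support ∧
              pq.2 ∈ (tp (htr l) (mth.1 l) (f.1 l)).support ∧
              tbond S e l j pq.1 = u' ∧ tbond S e l j pq.2 = v' ∧
              (pq.1 = pq.2 ∨ (S.F l).graph.Adj pq.1 pq.2)})
        (fun l hl => by
          have hNl : N ≤ l := hjN.trans hl
          set SS' : Set (Fin (S.F l).card) :=
            {w | S.bond l j hl w ∈ (tp (htr j) (mth.1 j) u').support} with hSS'def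
          have hm_in' : mth.1 l ∈ SS' := by
            have hb : S.bond l j hl (mth.1 l) = mth.1 j := mth.2 l j hl
            simp only [hSS'def, Set.mem_setOf_eq, hb]
            exact start_mem_tp _ _ _
          have hout' : ∃ w ∈ (tp (htr l) (mth.1 l) (f.1 l)).support, w ∉ SS' := by
            refine ⟨f.1 l, end_mem_tp _ _ _, fun hmem => ?_⟩
            rw [hSS'def, Set.mem_setOf_eq, f.2 l j hl] at hmem
            exact hpdisj (f.1 j) hmem (end_mem_tp _ _ _)
          obtain ⟨p, q, hpq_adj, hpS', hqnS', hsupp_l⟩ :=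
            crossing_path_split (htr l) hm_in' hout'
          have hpP : p ∈ (tp (htr l) (mth.1 l) (f.1 l)).support := by
            rw [hsupp_l]
            exact List.mem_append_left _ (end_mem_tp _ _ _)
          have hqP : q ∈ (tp (htr l) (mth.1 l) (f.1 l)).support := by
            rw [hsupp_l]
            exact List.mem_append_right _ (start_mem_tp _ _ _)
          have hcS : S.bond l j hl p ∈ (tp (htr j) (mth.1 j) u').support := hpS'
          have hdP : S.bond l j hl q ∈ (tp (htr j) (mth.1 j) (f.1 j)).support :=
            hbondP j l hl hjN q hqP
          have hdR : S.bond l j hl q ∈ (tp (htr j) v' (f.1 j)).support := by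
            rw [hsupp_eq] at hdP
            rcases List.mem_append.mp hdP with h | h
            · exact absurd h hqnS'
            · exact h
          have hcd_ne : S.bond l j hl p ≠ S.bond l j hl q := by
            intro hcd
            exact hpdisj _ hcS (hcd ▸ hdR)
          have hcd_adj : (S.F j).graph.Adj (S.bond l j hl p) (S.bond l j hl q) := by
            rcases epi_push (hepi l j hl) hpq_adj with h | h
            · exact absurd h hcd_ne
            · exact h
          obtain ⟨hc_eq, hd_eq⟩ := ident (htr j) hadj_uv hpdisj hcS hdR hcd_adj
          refine ⟨(p, q), hpP, hqP, ?_, ?_, Or.inr hpq_adj⟩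
          · rw [tbond_eq e hl]; exact hc_eq
          · rw [tbond_eq e hl]; exact hd_eq)
        (fun m' n h hn pq hpq => by
          obtain ⟨h1, h2, h3, h4, h5⟩ := hpq
          have hNn : N ≤ n := hjN.trans hn
          refine ⟨hbondP n m' h hNn pq.1 h1, hbondP n m' h hNn pq.2 h2, ?_, ?_, ?_⟩
          · show tbond S e n j (S.bond m' n h pq.1) = u'
            rw [← tbond_eq e h pq.1, tbond_comp e hn h]; exact h3
          · show tbond S e n j (S.bond m' n h pq.2) = v'
            rw [← tbond_eq e h pq.2, tbond_comp e hn h]; exact h4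
          · show S.bond m' n h pq.1 = S.bond m' n h pq.2 ∨
              (S.F n).graph.Adj (S.bond m' n h pq.1) (S.bond m' n h pq.2)
            rcases h5 with h5 | h5
            · exact Or.inl (congrArg (S.bond m' n h) h5)
            · rcases epi_push (hepi m' n h) h5 with h6 | h6
              · exact Or.inl h6
              · exact Or.inr h6)
      have hxj' : x.1 j = u' := by
        have := (hxy j le_rfl).2.2.1
        rwa [tbond_refl e] at this
      have hyj' : y.1 j = v' := by
        have := (hxy j le_rfl).2.2.2.1
        rwa [tbond_refl e] at this
      have hxXS : x ∈ XS := by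
        intro l hl
        rcases le_or_gt j l with hjl | hjl
        · exact (hxy l hjl).1
        · have hxl : x.1 l = S.bond j l hjl.le (x.1 j) := (x.2 j l hjl.le).symm
          rw [hxl]
          exact hbondP l j hjl.le hl (x.1 j) (by rw [hxj']; exact (by
            rw [hsupp_eq]
            exact List.mem_append_left _ (end_mem_tp _ _ _)))
      have hyXS : y ∈ XS := by
        intro l hl
        rcases le_or_gt j l with hjl | hjl
        · exact (hxy l hjl).2.1
        · have hyl : y.1 l = S.bond j l hjl.le (y.1 j) := (y.2 j l hjl.le).symm
          rw [hyl]
          exact hbondP l j hjl.le hl (y.1 j) (by rw [hyj']; exact hv'P)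
      have hxs : (⟨x, hxXS⟩ : XT) ∈ s := by
        apply hdet_s
        show x.1 j ∈ Ss j
        rw [hxj']
        exact hu'S
      have hyt : (⟨y, hyXS⟩ : XT) ∈ t := hdet_t _ (by
        show y.1 j ∈ Tt j
        rw [hyj']
        exact hv'T)
      apply hnoedge ⟨x, hxXS⟩ hxs ⟨y, hyXS⟩ hyt
      show PF.limitGraph S |>.Adj x y
      change x ≠ y ∧ PF.EdgeRel S x y
      constructor
      · intro hxeq
        exact hadj_uv.ne (by rw [← hxj', ← hyj', hxeq])
      · intro n
        rcases le_or_gt j n with hjn | hjn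
        · exact (hxy n hjn).2.2.2.2
        · have hxn : x.1 n = S.bond j n hjn.le (x.1 j) := (x.2 j n hjn.le).symm
          have hyn : y.1 n = S.bond j n hjn.le (y.1 j) := (y.2 j n hjn.le).symm
          rw [hxn, hyn, hxj', hyj']
          rcases epi_push (hepi j n hjn.le) hadj_uv with h | h
          · exact Or.inl h
          · exact Or.inr h
    rintro ⟨s, t, hscl, htcl, hsne, htne, hdisj, hcover, hnoedge⟩
    rcases (by rw [hcover]; exact Set.mem_univ (⟨mth, hmXS⟩ : XT) :
        (⟨mth, hmXS⟩ : XT) ∈ s ∪ t) with hms | hmt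
    · exact key s t hscl htcl hsne htne hdisj hcover hnoedge hms
    · exact key t s htcl hscl htne hsne hdisj.symm
        (by rw [Set.union_comm]; exact hcover)
        (fun a ha b hb hAdj => hnoedge b hb a ha hAdj.symm) hmt
  -- topological graph
  have htop : PF.IsTopGraph XT H := by
    haveI iT2L : T2Space (PF.Limit S) := inferInstanceAs
      (T2Space {x : ∀ n, Fin (S.F n).card // ∀ m n (h : n ≤ m), S.bond m n h (x m) = x n})
    haveI iTDL : TotallyDisconnectedSpace (PF.Limit S) := inferInstanceAs
      (TotallyDisconnectedSpace
        {x : ∀ n, Fin (S.F n).card // ∀ m n (h : n ≤ m), S.bond m n h (x m) = x n})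
    haveI iSCL : SecondCountableTopology (PF.Limit S) :=
      TopologicalSpace.secondCountableTopology_induced (PF.Limit S) (∀ n, Fin (S.F n).card) Subtype.val
    refine ⟨hcompactXT, inferInstance, inferInstance, inferInstance, ?_⟩
    have hclosedE : IsClosed {q : PF.Limit S × PF.Limit S |
        PF.EdgeRel S q.1 q.2 ∨ q.1 = q.2} := by
      have hE : {q : PF.Limit S × PF.Limit S | PF.EdgeRel S q.1 q.2}
          = ⋂ (n : ℕ), {q : PF.Limit S × PF.Limit S |
              (q.1.1 n, q.2.1 n) ∈ {r : Fin (S.F n).card × Fin (S.F n).card |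
                r.1 = r.2 ∨ (S.F n).graph.Adj r.1 r.2}} := by
        ext q
        simp only [Set.mem_setOf_eq, Set.mem_iInter]
        rfl
      have h1 : IsClosed {q : PF.Limit S × PF.Limit S | PF.EdgeRel S q.1 q.2} := by
        rw [hE]
        refine isClosed_iInter fun n => ?_
        have hcont : Continuous (fun q : PF.Limit S × PF.Limit S =>
            (q.1.1 n, q.2.1 n)) :=
          ((coord_continuous n).comp continuous_fst).prodMk
            ((coord_continuous n).comp continuous_snd)
        exact (isClosed_discrete _).preimage hcont
      have h2 : IsClosed {q : PF.Limit S × PF.Limit S | q.1 = q.2} :=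
        isClosed_eq continuous_fst continuous_snd
      exact h1.union h2
    have heqE : {p : XT × XT | H.Adj p.1 p.2 ∨ p.1 = p.2}
        = (fun p : XT × XT => ((p.1.1 : PF.Limit S), (p.2.1 : PF.Limit S))) ⁻¹'
          {q : PF.Limit S × PF.Limit S | PF.EdgeRel S q.1 q.2 ∨ q.1 = q.2} := by
      ext p
      simp only [Set.mem_setOf_eq, Set.mem_preimage]
      constructor
      · rintro (h | h)
        · exact Or.inl (show p.1.1 ≠ p.2.1 ∧ PF.EdgeRel S p.1.1 p.2.1 from h).2
        · exact Or.inr (congrArg Subtype.val h)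
      · rintro (h | h)
        · by_cases hpq : p.1 = p.2
          · exact Or.inr hpq
          · exact Or.inl (show p.1.1 ≠ p.2.1 ∧ PF.EdgeRel S p.1.1 p.2.1 from ⟨fun hv => hpq (Subtype.ext hv), h⟩)
        · exact Or.inr (Subtype.ext h)
    rw [heqE]
    exact hclosedE.preimage
      ((continuous_subtype_val.comp continuous_fst).prodMk
        (continuous_subtype_val.comp continuous_snd))
  -- arc
  have harc : PF.IsArcGraph XT H := by
    refine ⟨hconn, {(⟨mth, hmXS⟩ : XT), ⟨f, hfXS⟩}, ⟨⟨mth, hmXS⟩, ⟨f, hfXS⟩, subset_rfl⟩, ?_⟩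
    intro a ha
    have h1 : a.1 ≠ mth := by
      intro h
      exact ha (by left; exact Subtype.ext h)
    have h2 : a.1 ≠ f := by
      intro h
      exact ha (by right; exact Subtype.ext h)
    have := hcut a.1 a.2 h1 h2
    intro hcd
    exact this hcd
  -- apply the endpoint hypothesis
  obtain ⟨e₀, hend, hval⟩ := he XT H htop harc (Subtype.val) Subtype.val_injective rfl
    (fun a b => Iff.rfl) ⟨⟨e, heXS⟩, rfl⟩
  have he₀ : e₀ = ⟨e, heXS⟩ := Subtype.ext hval
  rw [he₀] at hend
  exact hcut e heXS hmth_ne_e.symm he_ne_f hend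
end
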